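/- arXiv:1505.02376 — 4 statements merged into one kernel-verified Lean document; each statement's English description precedes it below -/
import Mathlib

section
/- Let a<b, c<d, and θ₀<θ<θ₁ be real numbers. Let F:[a,b]×[c,d]→ℝ be continuous with F(s,c)=θ₀ and F(s,d)=θ₁ for all s∈[a,b]. Then there exists a connected subset Λ of F⁻¹({θ}) that intersects both {a}×[c,d] and {b}×[c,d]. -/
namespace HexWalk

inductive Dir : Type | E | N | W | S deriving DecidableEq

instance : Fintype Dir := ⟨{Dir.E, Dir.N, Dir.W, Dir.S}, fun x => by cases x <;> simp⟩

open Dir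

def dvec : Dir → ℤ × ℤ | E => (1,0) | N => (0,1) | W => (-1,0) | S => (0,-1)
def rot : Dir → Dir | E => S | S => W | W => N | N => E
def rotInv : Dir → Dir | S => E | W => S | N => W | E => N
def rcell : Dir → ℤ × ℤ | E => (0,-1) | W => (-1,0) | N => (0,0) | S => (-1,-1)
def lcell (d : Dir) : ℤ × ℤ := rcell (rotInv d)

lemma rot_rotInv (d : Dir) : rot (rotInv d) = d := by cases d <;> rfl
lemma rotInv_rot (d : Dir) : rotInv (rot d) = d := by cases d <;> rfl
lemma i1 (d : Dir) : lcell (rotInv d) = lcell d - dvec d := by cases d <;> rfl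
lemma i2 (d : Dir) : rcell (rot d) = rcell d - dvec d := by cases d <;> rfl
lemma i3 (d : Dir) : lcell (rot d) = rcell d := by cases d <;> rfl
lemma i5 (d : Dir) : rcell (rot (rot d)) = lcell d - dvec d := by cases d <;> rfl

lemma addsub (v w x : ℤ × ℤ) : v + w + (x - w) = v + x := by abel

def adj (p q : ℤ × ℤ) : Prop :=
  (p.1 = q.1 ∧ (p.2 = q.2 + 1 ∨ q.2 = p.2 + 1)) ∨
  (p.2 = q.2 ∧ (p.1 = q.1 + 1 ∨ q.1 = p.1 + 1))

def inGrid (m n : ℤ) (p : ℤ × ℤ) : Prop :=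
  0 ≤ p.1 ∧ p.1 < m ∧ 0 ≤ p.2 ∧ p.2 < n

inductive Reach (S : ℤ × ℤ → Prop) (m n : ℤ) : ℤ × ℤ → Prop
  | base (i : ℤ) : 0 ≤ i → i < m → ¬ S (i, 0) → Reach S m n (i, 0)
  | step (p q : ℤ × ℤ) : Reach S m n q → inGrid m n p → ¬ S p → adj p q →
      Reach S m n p

section Walk

variable (S : ℤ × ℤ → Prop) (m n : ℤ)

def Wcell (p : ℤ × ℤ) : Prop :=
  (0 ≤ p.1 ∧ p.1 < m ∧ p.2 < 0) ∨ Reach S m n p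

def IFace (s : (ℤ × ℤ) × Dir) : Prop :=
  Wcell S m n (s.1 + rcell s.2) ∧ ¬ Wcell S m n (s.1 + lcell s.2)


open Classical in
noncomputable def succ : (ℤ × ℤ) × Dir → (ℤ × ℤ) × Dir
  | (v, d) =>
    if Wcell S m n (v + dvec d + rcell d) then
      (if Wcell S m n (v + dvec d + lcell d) then (v + dvec d, rotInv d)
       else (v + dvec d, d))
    else (v + dvec d, rot d)

open Classical in
noncomputable def pred : (ℤ × ℤ) × Dir → (ℤ × ℤ) × Dir
  | (v, d) =>
    if Wcell S m n (v + rcell (rot d)) then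
      (if Wcell S m n (v + rcell (rot (rot d))) then (v - dvec (rot d), rot d)
       else (v - dvec d, d))
    else (v - dvec (rotInv d), rotInv d)

variable {S m n}

lemma succ_fst (s : (ℤ × ℤ) × Dir) : (succ S m n s).1 = s.1 + dvec s.2 := by
  obtain ⟨v, d⟩ := s
  simp only [succ]; split_ifs <;> rfl

lemma succ_main (s : (ℤ × ℤ) × Dir) (hs : IFace S m n s) :
    IFace S m n (succ S m n s) ∧ pred S m n (succ S m n s) = s := by
  obtain ⟨v, d⟩ := s
  obtain ⟨h1, h2⟩ := hs
  simp only [IFace] at h1 h2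
  have e2 : v + dvec d + rcell (rot d) = v + rcell d := by rw [i2, addsub]
  have e5 : v + dvec d + rcell (rot (rot d)) = v + lcell d := by rw [i5, addsub]
  have ecan : v + dvec d - dvec d = v := by abel
  by_cases hA : Wcell S m n (v + dvec d + rcell d)
  · by_cases hB : Wcell S m n (v + dvec d + lcell d)
    · -- left turn
      have hsucc : succ S m n (v, d) = (v + dvec d, rotInv d) := by
        simp only [succ]; rw [if_pos hA, if_pos hB]
      rw [hsucc]
      refine ⟨⟨?_, ?_⟩, ?_⟩
      · show Wcell S m n (v + dvec d + rcell (rotInv d))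
        exact hB
      · show ¬ Wcell S m n (v + dvec d + lcell (rotInv d))
        rw [i1, addsub]; exact h2
      · simp only [pred]; rw [rot_rotInv]
        rw [if_pos hA, if_pos (by rw [e2]; exact h1), ecan]
    · -- straight
      have hsucc : succ S m n (v, d) = (v + dvec d, d) := by
        simp only [succ]; rw [if_pos hA, if_neg hB]
      rw [hsucc]
      refine ⟨⟨hA, hB⟩, ?_⟩
      simp only [pred]
      rw [if_pos (by rw [e2]; exact h1), if_neg (by rw [e5]; exact h2), ecan]
  · -- right turn
    have hsucc : succ S m n (v, d) = (v + dvec d, rot d) := by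
      simp only [succ]; rw [if_neg hA]
    rw [hsucc]
    refine ⟨⟨?_, ?_⟩, ?_⟩
    · show Wcell S m n (v + dvec d + rcell (rot d))
      rw [e2]; exact h1
    · show ¬ Wcell S m n (v + dvec d + lcell (rot d))
      rw [i3]; exact hA
    · simp only [pred]; rw [rotInv_rot]
      rw [if_neg (by rw [e5]; exact h2), ecan]

lemma reach_inGrid (hn : 1 ≤ n) {p : ℤ × ℤ} (h : Reach S m n p) : inGrid m n p := by
  induction h with
  | base i h0 h1 h2 => exact ⟨h0, h1, le_rfl, by omega⟩
  | step p q hq hg hs ha => exact hg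

lemma wcell_x {p : ℤ × ℤ} (hn : 1 ≤ n) (h : Wcell S m n p) : 0 ≤ p.1 ∧ p.1 < m := by
  rcases h with ⟨h0, h1, _⟩ | hr
  · exact ⟨h0, h1⟩
  · exact ⟨(reach_inGrid hn hr).1, (reach_inGrid hn hr).2.1⟩

lemma wcell_y (hn : 1 ≤ n) (Htop : ∀ i, ¬ Reach S m n (i, n-1)) {p : ℤ × ℤ}
    (h : Wcell S m n p) : p.2 < n - 1 := by
  rcases h with ⟨_, _, h2⟩ | hr
  · omega
  · obtain ⟨hg1, hg2, hg3, hg4⟩ := reach_inGrid hn hr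
    by_contra hcon
    push_neg at hcon
    have hp2 : p.2 = n - 1 := by omega
    have hp : p = (p.1, n - 1) := by rw [← hp2]
    exact Htop p.1 (hp ▸ hr)

lemma sea_wcell {p : ℤ × ℤ} (h0 : 0 ≤ p.1) (h1 : p.1 < m) (h2 : p.2 < 0) :
    Wcell S m n p := Or.inl ⟨h0, h1, h2⟩

lemma contact (hn : 1 ≤ n) {p q : ℤ × ℤ} (hq : Wcell S m n q) (hp : ¬ Wcell S m n p)
    (hg : inGrid m n p) (ha : adj p q) : S p := by
  by_contra hS
  apply hp
  rcases hq with ⟨hq0, hq1, hq2⟩ | hr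
  · obtain ⟨p1, p2⟩ := p
    obtain ⟨q1, q2⟩ := q
    simp only [adj] at ha
    simp only [inGrid] at hg
    have hp2 : p2 = 0 := by rcases ha with ⟨h, h'⟩ | ⟨h, h'⟩ <;> omega
    subst hp2
    exact Or.inr (Reach.base p1 hg.1 hg.2.1 hS)
  · exact Or.inr (Reach.step p q hr hg hS ha)

lemma iface_bounds (hn : 1 ≤ n) (Htop : ∀ i, ¬ Reach S m n (i, n-1))
    {s : (ℤ × ℤ) × Dir} (hs : IFace S m n s) :
    0 ≤ s.1.1 ∧ s.1.1 ≤ m ∧ s.1.2 ≤ n - 1 := by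
  obtain ⟨⟨v1, v2⟩, d⟩ := s
  obtain ⟨h1, h2⟩ := hs
  cases d <;>
    simp only [rcell, lcell, rotInv, Prod.mk_add_mk, add_zero] at h1 h2 <;>
    [skip; skip; skip; skip] <;>
    · have hx := wcell_x hn h1
      have hy := wcell_y hn Htop h1
      simp only at hx hy ⊢
      omega

lemma low_class (hn : 1 ≤ n) {s : (ℤ × ℤ) × Dir} (hs : IFace S m n s)
    (hy : s.1.2 ≤ -1) :
    (s.2 = Dir.N ∧ s.1.1 = 0) ∨ (s.2 = Dir.S ∧ s.1.1 = m) := by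
  obtain ⟨⟨v1, v2⟩, d⟩ := s
  obtain ⟨h1, h2⟩ := hs
  simp only at hy
  cases d <;> simp only [rcell, lcell, rotInv, Prod.mk_add_mk, add_zero] at h1 h2
  · -- E
    exfalso
    rcases h1 with ⟨a, b, c⟩ | hr
    · exact h2 (sea_wcell (by simpa using a) (by simpa using b) (by simp; omega))
    · have := (reach_inGrid hn hr).2.2.1; simp at this; omega
  · -- N
    left
    rcases h1 with ⟨a, b, c⟩ | hr
    · simp only at a b c
      refine ⟨rfl, ?_⟩
      show v1 = 0
      by_contra hv1
      exact h2 (sea_wcell (by simp; omega) (by simp; omega) (by simp; omega))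
    · have := (reach_inGrid hn hr).2.2.1; simp at this; omega
  · -- W
    exfalso
    rcases h1 with ⟨a, b, c⟩ | hr
    · exact h2 (sea_wcell (by simpa using a) (by simpa using b) (by simp; omega))
    · have := (reach_inGrid hn hr).2.2.1; simp at this; omega
  · -- S
    right
    rcases h1 with ⟨a, b, c⟩ | hr
    · simp only at a b c
      refine ⟨rfl, ?_⟩
      show v1 = m
      by_contra hv1
      exact h2 (sea_wcell (by simp; omega) (by simp; omega) (by simp; omega))
    · have := (reach_inGrid hn hr).2.2.1; simp at this; omega

lemma left_grid (hn : 1 ≤ n) (Htop : ∀ i, ¬ Reach S m n (i, n-1))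
    {s : (ℤ × ℤ) × Dir} (hs : IFace S m n s)
    (hlw : ¬ (s.2 = Dir.N ∧ s.1.1 = 0)) (hxm : s.1.1 ≠ m) :
    inGrid m n (s.1 + lcell s.2) ∧ S (s.1 + lcell s.2) := by
  obtain ⟨⟨v1, v2⟩, d⟩ := s
  obtain ⟨h1, h2⟩ := hs
  simp only at hxm
  cases d <;> simp only [rcell, lcell, rotInv, Prod.mk_add_mk, add_zero] at h1 h2 ⊢
  · -- E : l = (v1, v2), r = (v1, v2 - 1)
    have hx := wcell_x hn h1
    have hy := wcell_y hn Htop h1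
    simp only at hx hy
    have hl2 : 0 ≤ v2 := by
      by_contra hc
      exact h2 (sea_wcell (by simp; omega) (by simp; omega) (by simp; omega))
    have hg : inGrid m n (v1, v2) := ⟨by simpa using hx.1, by simpa using hx.2, by simp; omega, by simp; omega⟩
    exact ⟨hg, contact hn h1 h2 hg (Or.inl ⟨rfl, Or.inl (by simp)⟩)⟩
  · -- N : l = (v1 - 1, v2), r = (v1, v2)
    have hx := wcell_x hn h1
    have hy := wcell_y hn Htop h1
    simp only at hx hy
    have hv1 : v1 ≠ 0 := fun h => hlw ⟨rfl, h⟩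
    have hl2 : 0 ≤ v2 := by
      by_contra hc
      exact h2 (sea_wcell (by simp; omega) (by simp; omega) (by simp; omega))
    have hg : inGrid m n (v1 - 1, v2) := ⟨by simp; omega, by simp; omega, by simp; omega, by simp; omega⟩
    exact ⟨hg, contact hn h1 h2 hg (Or.inr ⟨by simp, Or.inr (by simp)⟩)⟩
  · -- W : l = (v1 - 1, v2 - 1), r = (v1 - 1, v2)
    have hx := wcell_x hn h1
    have hy := wcell_y hn Htop h1
    simp only at hx hy
    have hl2 : 0 ≤ v2 - 1 := by
      by_contra hc
      exact h2 (sea_wcell (by simp; omega) (by simp; omega) (by simp; omega))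
    have hg : inGrid m n (v1 - 1, v2 - 1) := ⟨by simp; omega, by simp; omega, by simp; omega, by simp; omega⟩
    exact ⟨hg, contact hn h1 h2 hg (Or.inl ⟨by simp, Or.inr (by simp)⟩)⟩
  · -- S : l = (v1, v2 - 1), r = (v1 - 1, v2 - 1)
    have hx := wcell_x hn h1
    have hy := wcell_y hn Htop h1
    simp only at hx hy
    have hv1m : v1 < m := by omega
    have hl2 : 0 ≤ v2 - 1 := by
      by_contra hc
      exact h2 (sea_wcell (by simp; omega) (by simp; omega) (by simp; omega))
    have hg : inGrid m n (v1, v2 - 1) := ⟨by simp; omega, by simp; omega, by simp; omega, by simp; omega⟩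
    exact ⟨hg, contact hn h1 h2 hg (Or.inr ⟨by simp, Or.inl (by simp)⟩)⟩

lemma notW_negx (hn : 1 ≤ n) {p : ℤ × ℤ} (hp : p.1 < 0) : ¬ Wcell S m n p :=
  fun h => by have := (wcell_x hn h).1; omega

lemma lnear : ∀ d₁ d₂ : Dir,
    (lcell d₁).1 ≤ (lcell d₂).1 + 1 ∧ (lcell d₂).1 ≤ (lcell d₁).1 + 1 ∧
    (lcell d₁).2 ≤ (lcell d₂).2 + 1 ∧ (lcell d₂).2 ≤ (lcell d₁).2 + 1 := by decide

theorem hex (hm : 1 ≤ m) (hn : 1 ≤ n) (Htop : ∀ i, ¬ Reach S m n (i, n-1)) :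
    ∃ (k₁ k₂ : ℕ) (g : ℕ → ℤ × ℤ), k₁ ≤ k₂ ∧
      (∀ k, k₁ ≤ k → k ≤ k₂ → inGrid m n (g k) ∧ S (g k)) ∧
      (∀ k, k₁ ≤ k → k < k₂ →
        (g (k+1)).1 ≤ (g k).1 + 1 ∧ (g k).1 ≤ (g (k+1)).1 + 1 ∧
        (g (k+1)).2 ≤ (g k).2 + 1 ∧ (g k).2 ≤ (g (k+1)).2 + 1) ∧
      (g k₁).1 = 0 ∧ (g k₂).1 = m - 1 := by
  classical
  set s₀ : (ℤ × ℤ) × Dir := ((0, -1), Dir.N) with hs₀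
  set f : ℕ → (ℤ × ℤ) × Dir := fun k => (succ S m n)^[k] s₀ with hfdef
  have hf0 : f 0 = s₀ := rfl
  have hfs : ∀ k, f (k+1) = succ S m n (f k) := by
    intro k
    simp only [hfdef, Function.iterate_succ_apply']
  have hIF0 : IFace S m n s₀ := by
    constructor
    · exact sea_wcell (by simp [rcell, hs₀]) (by simp [rcell, hs₀]; omega) (by simp [rcell, hs₀])
    · apply notW_negx hn
      simp [lcell, rotInv, rcell, hs₀]
  have hIF : ∀ k, IFace S m n (f k) := by
    intro k
    induction k with
    | zero => exact hIF0
    | succ k ih => rw [hfs]; exact (succ_main _ ih).1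
  have hpredf : ∀ k, pred S m n (f (k+1)) = f k := by
    intro k; rw [hfs]; exact (succ_main _ (hIF k)).2
  have hvert : ∀ k, (f (k+1)).1 = (f k).1 + dvec (f k).2 := fun k => by
    rw [hfs]; exact succ_fst _
  have hpreds₀ : pred S m n s₀ = ((0, -2), Dir.N) := by
    have e1 : ((0:ℤ), (-1:ℤ)) + rcell (rot Dir.N) = (0, -2) := by decide
    have e2 : ((0:ℤ), (-1:ℤ)) + rcell (rot (rot Dir.N)) = (-1, -2) := by decide
    show pred S m n ((0, -1), Dir.N) = _
    simp only [pred]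
    rw [e1, e2]
    rw [if_pos (sea_wcell (by simp) (by simp; omega) (by simp)),
        if_neg (notW_negx hn (by simp))]
    decide
  -- dvec second coordinate bounds
  have hdb : ∀ d : Dir, -1 ≤ (dvec d).1 ∧ (dvec d).1 ≤ 1 ∧ -1 ≤ (dvec d).2 ∧ (dvec d).2 ≤ 1 := by
    decide
  have hy0 : (f 0).1.2 = -1 := rfl
  -- The walk must eventually hit the right wall x = m
  have hhit : ∃ k, (f k).1.1 = m := by
    by_contra hno
    push_neg at hno
    have hR : ∀ k, -1 ≤ (f k).1.2 ∧ ((f k).1.2 = -1 → f k = s₀) := by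
      intro k
      induction k with
      | zero => exact ⟨by rw [hy0], fun _ => hf0⟩
      | succ k ih =>
        have hvk : (f (k+1)).1.2 = (f k).1.2 + (dvec (f k).2).2 := by
          rw [hvert k, Prod.snd_add]
        by_cases hym : (f k).1.2 = -1
        · have hk : f k = s₀ := ih.2 hym
          have hv2 : (f (k+1)).1.2 = 0 := by rw [hvk, hk]; rfl
          exact ⟨by omega, fun h => by omega⟩
        · have hyk : 0 ≤ (f k).1.2 := by have := ih.1; omega
          have hge : -1 ≤ (f (k+1)).1.2 := by have := (hdb (f k).2).2.2.1; omega
          refine ⟨hge, fun hy1 => ?_⟩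
          rcases low_class hn (hIF (k+1)) (by omega) with ⟨hd0, h0⟩ | ⟨_, hmm⟩
          · refine Prod.ext (Prod.ext ?_ ?_) hd0
            · simpa using h0
            · simpa using hy1
          · exact absurd hmm (hno (k+1))
    -- injectivity of the walk
    have hkey : ∀ i j, i < j → f i ≠ f j := by
      intro i j hlt heq
      have hcancel : ∀ t, t ≤ i → f (i - t) = f (j - t) := by
        intro t
        induction t with
        | zero => intro _; simpa using heq
        | succ t ih =>
          intro hti
          have h1 : f (i - t) = f (j - t) := ih (by omega)
          have hi : i - t = (i - (t+1)) + 1 := by omega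
          have hj : j - t = (j - (t+1)) + 1 := by omega
          rw [hi, hj] at h1
          have h2 := congrArg (pred S m n) h1
          rwa [hpredf, hpredf] at h2
      have h0 : f 0 = f (j - i) := by
        have := hcancel i le_rfl
        simpa using this
      have hpos : 1 ≤ j - i := by omega
      have he : j - i - 1 + 1 = j - i := by omega
      have hp : f (j - i - 1) = pred S m n (f (j - i)) := by
        rw [← hpredf (j - i - 1), he]
      rw [← h0, hf0, hpreds₀] at hp
      have hcon := (hR (j - i - 1)).1
      rw [hp] at hcon
      norm_num at hcon
    have hinj : Function.Injective f := by
      intro i j hij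
      by_contra hne
      rcases Nat.lt_or_ge i j with h | h
      · exact hkey i j h hij
      · exact hkey j i (by omega) hij.symm
    have hbox : ∀ k, f k ∈ (Set.Icc (0:ℤ) m ×ˢ Set.Icc (-1:ℤ) (n-1)) ×ˢ (Set.univ : Set Dir) := by
      intro k
      have hb := iface_bounds hn Htop (hIF k)
      have hr := (hR k).1
      exact ⟨⟨⟨hb.1, hb.2.1⟩, ⟨hr, hb.2.2⟩⟩, trivial⟩
    have hfin : ((Set.Icc (0:ℤ) m ×ˢ Set.Icc (-1:ℤ) (n-1)) ×ˢ (Set.univ : Set Dir)).Finite :=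
      ((Set.finite_Icc _ _).prod (Set.finite_Icc _ _)).prod Set.finite_univ
    exact (Set.infinite_range_of_injective hinj) (hfin.subset (Set.range_subset_iff.mpr hbox))
  -- first hitting index
  set k₂ := Nat.find hhit with hk₂def
  have hk₂ : (f k₂).1.1 = m := Nat.find_spec hhit
  have hk₂min : ∀ k, k < k₂ → (f k).1.1 ≠ m := fun k hk => Nat.find_min hhit hk
  have hx0 : (f 0).1.1 = 0 := rfl
  have hk₂pos : 0 < k₂ := by
    rcases Nat.eq_zero_or_pos k₂ with h | h
    · rw [h] at hk₂; rw [hx0] at hk₂; omega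
    · exact h
  -- refined version of hR valid up to k₂
  have hR2 : ∀ k, k ≤ k₂ → -1 ≤ (f k).1.2 ∧ ((f k).1.2 = -1 → f k = s₀ ∨ k = k₂) := by
    intro k
    induction k with
    | zero => exact fun _ => ⟨by rw [hy0], fun _ => Or.inl hf0⟩
    | succ k ih =>
      intro hk1
      have hvk : (f (k+1)).1.2 = (f k).1.2 + (dvec (f k).2).2 := by
        rw [hvert k, Prod.snd_add]
      have ihk := ih (by omega)
      by_cases hym : (f k).1.2 = -1
      · have hk' : f k = s₀ ∨ k = k₂ := ihk.2 hym
        have hks : f k = s₀ := by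
          rcases hk' with h | h
          · exact h
          · omega
        have hv2 : (f (k+1)).1.2 = 0 := by rw [hvk, hks]; rfl
        exact ⟨by omega, fun h => by omega⟩
      · have hyk : 0 ≤ (f k).1.2 := by have := ihk.1; omega
        have hge : -1 ≤ (f (k+1)).1.2 := by have := (hdb (f k).2).2.2.1; omega
        refine ⟨hge, fun hy1 => ?_⟩
        rcases low_class hn (hIF (k+1)) (by omega) with ⟨hd0, h0⟩ | ⟨_, hmm⟩
        · left
          refine Prod.ext (Prod.ext ?_ ?_) hd0
          · simpa using h0
          · simpa using hy1
        · right
          by_contra hne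
          exact hk₂min (k+1) (by omega) hmm
  -- direction and position just before hitting the wall
  have hek : k₂ - 1 + 1 = k₂ := by omega
  have hend : (f (k₂ - 1)).2 = Dir.E ∧ (f (k₂ - 1)).1.1 = m - 1 := by
    have hv := hvert (k₂ - 1)
    rw [hek] at hv
    have hb := iface_bounds hn Htop (hIF (k₂ - 1))
    have hne : (f (k₂ - 1)).1.1 ≠ m := hk₂min _ (by omega)
    have hx : m = (f (k₂ - 1)).1.1 + (dvec (f (k₂ - 1)).2).1 := by
      rw [← hk₂, hv, Prod.fst_add]
    cases hd : (f (k₂ - 1)).2 <;> rw [hd] at hx <;> simp [dvec] at hx <;>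
      first
        | exact ⟨rfl, by omega⟩
        | omega
  -- the last visit to the left wall before k₂
  set P : ℕ → Prop := fun k => (f k).2 = Dir.N ∧ (f k).1.1 = 0 with hPdef
  have hP0 : P 0 := ⟨rfl, rfl⟩
  set k₁ := Nat.findGreatest P (k₂ - 1) with hk₁def
  have hk₁P : P k₁ := Nat.findGreatest_spec (Nat.zero_le _) hP0
  have hk₁le : k₁ ≤ k₂ - 1 := Nat.findGreatest_le _
  have hk₁max : ∀ k, k₁ < k → k ≤ k₂ - 1 → ¬ P k := fun k h1 h2 =>
    Nat.findGreatest_is_greatest h1 h2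
  have hfk₁ : f k₁ = ((0, (f k₁).1.2), Dir.N) := by
    refine Prod.ext (Prod.ext ?_ rfl) hk₁P.1
    simpa using hk₁P.2
  set y := (f k₁).1.2 with hydef
  -- at k₁ the walk must turn right (into the grid)
  have hA : ¬ Wcell S m n (((0:ℤ), y) + dvec Dir.N + rcell Dir.N) := by
    intro hA
    have hB : ¬ Wcell S m n (((0:ℤ), y) + dvec Dir.N + lcell Dir.N) := by
      apply notW_negx hn
      simp [dvec, lcell, rotInv, rcell]
    have hstep : f (k₁+1) = (((0:ℤ), y) + dvec Dir.N, Dir.N) := by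
      rw [hfs, hfk₁]
      simp only [succ]
      rw [if_pos hA, if_neg hB]
    have hPk : P (k₁+1) := by
      rw [hPdef]
      constructor
      · rw [hstep]
      · rw [hstep]; simp [dvec]
    by_cases hcase : k₁ + 1 ≤ k₂ - 1
    · exact hk₁max _ (by omega) hcase hPk
    · have hke : k₁ + 1 = k₂ := by omega
      have := hPk.2
      rw [hke] at this
      rw [this] at hk₂
      omega
  have hstart : f (k₁ + 1) = ((0, y + 1), Dir.E) := by
    rw [hfs, hfk₁]
    simp only [succ]
    rw [if_neg hA]
    have : ((0:ℤ), y) + dvec Dir.N = (0, y + 1) := by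
      simp [dvec, Prod.mk_add_mk]
    rw [this]
    rfl
  have hSlt : k₁ + 1 < k₂ := by
    rcases Nat.lt_or_ge (k₁ + 1) k₂ with h | h
    · exact h
    · exfalso
      have hke : k₁ + 1 = k₂ := by omega
      have : (f k₂).1.1 = 0 := by rw [← hke, hstart]
      omega
  -- the king path
  set g : ℕ → ℤ × ℤ := fun k => (f k).1 + lcell (f k).2 with hgdef
  refine ⟨k₁ + 1, k₂ - 1, g, by omega, ?_, ?_, ?_, ?_⟩
  · intro k h1 h2
    have hnlw : ¬ ((f k).2 = Dir.N ∧ (f k).1.1 = 0) := hk₁max k (by omega) h2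
    have hxm : (f k).1.1 ≠ m := hk₂min k (by omega)
    exact left_grid hn Htop (hIF k) hnlw hxm
  · intro k h1 h2
    have e1 : g k = (f k).1 + dvec (f k).2 + lcell (rotInv (f k).2) := by
      rw [hgdef]
      simp only
      rw [i1]
      abel
    have e2 : g (k+1) = (f k).1 + dvec (f k).2 + lcell ((f (k+1)).2) := by
      rw [hgdef]
      simp only
      rw [hvert k]
    have hl := lnear ((f (k+1)).2) (rotInv (f k).2)
    rw [e1, e2]
    simp only [Prod.fst_add, Prod.snd_add]
    omega
  · rw [hgdef]
    simp only
    rw [hstart]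
    simp [lcell, rotInv, rcell]
  · rw [hgdef]
    simp only
    have h2 := hend.1
    have h1 := hend.2
    rw [h2]
    have : lcell Dir.E = (0, 0) := rfl
    rw [this, Prod.fst_add, h1]
    simp

end Walk

end HexWalk

open Set

theorem stmt_0 (a b c d θ₀ θ θ₁ : ℝ) (hab : a < b) (hcd : c < d)
    (hθ₀ : θ₀ < θ) (hθ₁ : θ < θ₁)
    (F : ℝ × ℝ → ℝ) (hF : ContinuousOn F (Icc a b ×ˢ Icc c d))
    (hbot : ∀ s ∈ Icc a b, F (s, c) = θ₀)
    (htop : ∀ s ∈ Icc a b, F (s, d) = θ₁) :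
    ∃ Λ : Set (ℝ × ℝ), Λ ⊆ (Icc a b ×ˢ Icc c d) ∩ F ⁻¹' {θ} ∧
      IsConnected Λ ∧
      (Λ ∩ ({a} ×ˢ Icc c d)).Nonempty ∧
      (Λ ∩ ({b} ×ˢ Icc c d)).Nonempty := by
  classical
  set R : Set (ℝ × ℝ) := Icc a b ×ˢ Icc c d with hRdef
  set K : Set (ℝ × ℝ) := R ∩ F ⁻¹' {θ} with hKdef
  set L : Set (ℝ × ℝ) := {a} ×ˢ Icc c d with hLdef
  set Rt : Set (ℝ × ℝ) := {b} ×ˢ Icc c d with hRtdef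
  have hRcomp : IsCompact R := isCompact_Icc.prod isCompact_Icc
  have hKcl : IsClosed K :=
    hF.preimage_isClosed_of_isClosed (isClosed_Icc.prod isClosed_Icc) isClosed_singleton
  have hKcomp : IsCompact K := hRcomp.of_isClosed_subset hKcl inter_subset_left
  have hLcl : IsClosed L := isClosed_singleton.prod isClosed_Icc
  have hRtcl : IsClosed Rt := isClosed_singleton.prod isClosed_Icc
  -- vertical IVT
  have hedge : ∀ x ∈ Icc a b, ∃ t ∈ Icc c d, F (x, t) = θ := by
    intro x hx
    have hcont : ContinuousOn (fun t => F (x, t)) (Icc c d) :=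
      hF.comp ((Continuous.prodMk_right x).continuousOn) (fun t ht => ⟨hx, ht⟩)
    have hIVT := intermediate_value_Icc hcd.le hcont
    rw [hbot x hx, htop x hx] at hIVT
    obtain ⟨t, ht, hFt⟩ := hIVT ⟨hθ₀.le, hθ₁.le⟩
    exact ⟨t, ht, hFt⟩
  have hKL : (K ∩ L).Nonempty := by
    obtain ⟨t, ht, hFt⟩ := hedge a (left_mem_Icc.mpr hab.le)
    exact ⟨(a, t), ⟨⟨⟨le_rfl, hab.le⟩, ht⟩, hFt⟩, ⟨rfl, ht⟩⟩
  have hKRt : (K ∩ Rt).Nonempty := by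
    obtain ⟨t, ht, hFt⟩ := hedge b (right_mem_Icc.mpr hab.le)
    exact ⟨(b, t), ⟨⟨⟨hab.le, le_rfl⟩, ht⟩, hFt⟩, ⟨rfl, ht⟩⟩
  by_cases hGood : ∃ x ∈ K, (connectedComponentIn K x ∩ L).Nonempty ∧
      (connectedComponentIn K x ∩ Rt).Nonempty
  · obtain ⟨x, hx, h1, h2⟩ := hGood
    exact ⟨connectedComponentIn K x, connectedComponentIn_subset K x,
      ⟨connectedComponentIn_nonempty_iff.mpr hx, isPreconnected_connectedComponentIn⟩, h1, h2⟩
  exfalso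
  have hsep : ∀ x ∈ K ∩ L, connectedComponentIn K x ∩ Rt = ∅ := by
    intro x hx
    by_contra hne
    exact hGood ⟨x, hx.1, ⟨x, mem_connectedComponentIn hx.1, hx.2⟩,
      nonempty_iff_ne_empty.mpr hne⟩
  -- Šura-Bura separation : a clopen splitting of K separating K ∩ L from K ∩ Rt
  obtain ⟨U, V, hUcomp, hVcomp, hUV, hdisj, hKLU, hKRV⟩ :
      ∃ U V : Set (ℝ × ℝ), IsCompact U ∧ IsCompact V ∧ U ∪ V = K ∧ Disjoint U V ∧
        K ∩ L ⊆ U ∧ K ∩ Rt ⊆ V := by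
    haveI : CompactSpace K := isCompact_iff_compactSpace.mp hKcomp
    set LK : Set K := Subtype.val ⁻¹' L with hLK
    set RK : Set K := Subtype.val ⁻¹' Rt with hRK
    have hLKcl : IsClosed LK := hLcl.preimage continuous_subtype_val
    have hRKcl : IsClosed RK := hRtcl.preimage continuous_subtype_val
    have hclop : ∀ x : LK, ∃ Z : Set K, IsClopen Z ∧ (x : K) ∈ Z ∧ Z ∩ RK = ∅ := by
      intro x
      have hxK : ((x : K) : ℝ × ℝ) ∈ K := (x : K).2
      have hxL : ((x : K) : ℝ × ℝ) ∈ L := x.2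
      have hcc : connectedComponent (x : K) ∩ RK = ∅ := by
        rw [eq_empty_iff_forall_notMem]
        rintro z ⟨hz1, hz2⟩
        have hzin : (z : ℝ × ℝ) ∈ connectedComponentIn K ((x : K) : ℝ × ℝ) := by
          rw [connectedComponentIn_eq_image hxK]
          exact ⟨z, hz1, rfl⟩
        have := hsep _ ⟨hxK, hxL⟩
        rw [eq_empty_iff_forall_notMem] at this
        exact this _ ⟨hzin, hz2⟩
      haveI : Nonempty {s : Set K // IsClopen s ∧ (x : K) ∈ s} :=
        ⟨⟨univ, isClopen_univ, mem_univ _⟩⟩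
      have hdir : Directed (· ⊇ ·)
          (fun Z : {s : Set K // IsClopen s ∧ (x : K) ∈ s} => (Z : Set K)) := by
        intro Z1 Z2
        exact ⟨⟨Z1 ∩ Z2, Z1.2.1.inter Z2.2.1, ⟨Z1.2.2, Z2.2.2⟩⟩,
          inter_subset_left, inter_subset_right⟩
      have hint : (RK ∩ ⋂ Z : {s : Set K // IsClopen s ∧ (x : K) ∈ s}, (Z : Set K)) = ∅ := by
        rw [← connectedComponent_eq_iInter_isClopen (x : K), inter_comm]
        exact hcc
      obtain ⟨Z, hZ⟩ := hRKcl.isCompact.elim_directed_family_closed _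
        (fun Z => Z.2.1.isClosed) hint hdir
      exact ⟨Z, Z.2.1, Z.2.2, by rw [inter_comm]; exact hZ⟩
    choose Z hZclop hZmem hZdisj using hclop
    obtain ⟨t, ht⟩ := hLKcl.isCompact.elim_finite_subcover Z (fun x => (hZclop x).isOpen)
      (fun z hz => mem_iUnion.mpr ⟨⟨z, hz⟩, hZmem ⟨z, hz⟩⟩)
    set W : Set K := ⋃ x ∈ t, Z x with hW
    have hWclop : IsClopen W := isClopen_biUnion_finset (fun x _ => hZclop x)
    have hWRK : W ∩ RK = ∅ := by
      rw [hW, iUnion₂_inter]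
      simp only [iUnion_eq_empty]
      intro x _
      exact hZdisj x
    refine ⟨Subtype.val '' W, Subtype.val '' Wᶜ,
      (hWclop.isClosed.isCompact).image continuous_subtype_val,
      ((hWclop.compl).isClosed.isCompact).image continuous_subtype_val, ?_, ?_, ?_, ?_⟩
    · rw [← image_union, union_compl_self, image_univ, Subtype.range_coe]
    · exact (Set.disjoint_image_iff Subtype.coe_injective).mpr disjoint_compl_right
    · rintro p ⟨hpK, hpL⟩
      have : (⟨p, hpK⟩ : K) ∈ LK := hpL
      obtain ⟨x, hx1, hx2⟩ := mem_iUnion₂.mp (ht this)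
      exact ⟨⟨p, hpK⟩, mem_biUnion hx1 hx2, rfl⟩
    · rintro p ⟨hpK, hpRt⟩
      refine ⟨⟨p, hpK⟩, fun hmem => ?_, rfl⟩
      rw [eq_empty_iff_forall_notMem] at hWRK
      exact hWRK _ ⟨hmem, hpRt⟩

    -- positive separation distances
  have hVK : V ⊆ K := by rw [← hUV]; exact subset_union_right
  have hUK : U ⊆ K := by rw [← hUV]; exact subset_union_left
  have hVL : Disjoint V L := by
    rw [Set.disjoint_left]
    intro p hpV hpL
    exact Set.disjoint_left.mp hdisj (hKLU ⟨hVK hpV, hpL⟩) hpV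
  have hURt : Disjoint U Rt := by
    rw [Set.disjoint_left]
    intro p hpU hpRt
    exact Set.disjoint_left.mp hdisj hpU (hKRV ⟨hUK hpU, hpRt⟩)
  obtain ⟨δ₁, hδ₁pos, hδ₁⟩ := hdisj.exists_thickenings hUcomp hVcomp.isClosed
  obtain ⟨δ₂, hδ₂pos, hδ₂⟩ := hVL.exists_thickenings hVcomp hLcl
  obtain ⟨δ₃, hδ₃pos, hδ₃⟩ := hURt.exists_thickenings hUcomp hRtcl
  have hd₁ : ∀ u ∈ U, ∀ v ∈ V, ¬ dist u v < δ₁ := by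
    intro u hu v hv hlt
    exact Set.disjoint_left.mp hδ₁
      (Metric.mem_thickening_iff.mpr ⟨u, hu, by rwa [dist_comm]⟩)
      (Metric.self_subset_thickening hδ₁pos V hv)
  have hd₂ : ∀ v ∈ V, ∀ w ∈ L, ¬ dist v w < δ₂ := by
    intro v hv w hw hlt
    exact Set.disjoint_left.mp hδ₂
      (Metric.mem_thickening_iff.mpr ⟨v, hv, by rwa [dist_comm]⟩)
      (Metric.self_subset_thickening hδ₂pos L hw)
  have hd₃ : ∀ u ∈ U, ∀ w ∈ Rt, ¬ dist u w < δ₃ := by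
    intro u hu w hw hlt
    exact Set.disjoint_left.mp hδ₃
      (Metric.mem_thickening_iff.mpr ⟨u, hu, by rwa [dist_comm]⟩)
      (Metric.self_subset_thickening hδ₃pos Rt hw)
  set ρ : ℝ := min δ₁ (min δ₂ δ₃) with hρdef
  have hρpos : 0 < ρ := lt_min hδ₁pos (lt_min hδ₂pos hδ₃pos)
  have hρ₁ : ρ ≤ δ₁ := min_le_left _ _
  have hρ₂ : ρ ≤ δ₂ := le_trans (min_le_right _ _) (min_le_left _ _)
  have hρ₃ : ρ ≤ δ₃ := le_trans (min_le_right _ _) (min_le_right _ _)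
  -- grid size
  obtain ⟨N, hN⟩ := exists_nat_gt (max ((b - a) / (ρ / 4)) (max ((d - c) / (ρ / 4)) 1))
  have hNr : (1:ℝ) < N :=
    lt_of_le_of_lt (le_trans (le_max_right _ _) (le_max_right _ _)) hN
  have hNpos : (0:ℝ) < N := by linarith
  have hN1 : 1 ≤ (N:ℤ) := by exact_mod_cast hNr.le
  set hx : ℝ := (b - a) / N with hhxdef
  set hy : ℝ := (d - c) / N with hhydef
  have hhxpos : 0 < hx := div_pos (by linarith) hNpos
  have hhypos : 0 < hy := div_pos (by linarith) hNpos
  have hhxρ : hx < ρ / 4 := by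
    rw [hhxdef, div_lt_iff₀ hNpos]
    have h1 : (b - a) / (ρ / 4) < N := lt_of_le_of_lt (le_max_left _ _) hN
    rw [div_lt_iff₀ (by positivity)] at h1
    linarith
  have hhyρ : hy < ρ / 4 := by
    rw [hhydef, div_lt_iff₀ hNpos]
    have h1 : (d - c) / (ρ / 4) < N :=
      lt_of_le_of_lt (le_trans (le_max_left _ _) (le_max_right _ _)) hN
    rw [div_lt_iff₀ (by positivity)] at h1
    linarith
  have hNhx : (N:ℝ) * hx = b - a := by
    rw [hhxdef]; field_simp
  have hNhy : (N:ℝ) * hy = d - c := by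
    rw [hhydef]; field_simp
  -- the grid cells
  set cell : ℤ × ℤ → Set (ℝ × ℝ) := fun p =>
    Icc (a + (p.1 : ℝ) * hx) (a + ((p.1 : ℝ) + 1) * hx) ×ˢ
    Icc (c + (p.2 : ℝ) * hy) (c + ((p.2 : ℝ) + 1) * hy) with hcelldef
  have hcellR : ∀ p : ℤ × ℤ, HexWalk.inGrid (N:ℤ) (N:ℤ) p → cell p ⊆ R := by
    rintro ⟨i, j⟩ ⟨h0, h1, h2, h3⟩ ⟨z1, z2⟩ ⟨⟨hz1l, hz1r⟩, hz2l, hz2r⟩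
    simp only at hz1l hz1r hz2l hz2r
    have c0 : (0:ℝ) ≤ (i:ℝ) := by exact_mod_cast h0
    have c1 : (i:ℝ) + 1 ≤ (N:ℝ) := by exact_mod_cast (by omega : i + 1 ≤ (N:ℤ))
    have c2 : (0:ℝ) ≤ (j:ℝ) := by exact_mod_cast h2
    have c3 : (j:ℝ) + 1 ≤ (N:ℝ) := by exact_mod_cast (by omega : j + 1 ≤ (N:ℤ))
    have m0 : (0:ℝ) ≤ (i:ℝ) * hx := mul_nonneg c0 hhxpos.le
    have m1 : ((i:ℝ) + 1) * hx ≤ (N:ℝ) * hx := mul_le_mul_of_nonneg_right c1 hhxpos.le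
    have m2 : (0:ℝ) ≤ (j:ℝ) * hy := mul_nonneg c2 hhypos.le
    have m3 : ((j:ℝ) + 1) * hy ≤ (N:ℝ) * hy := mul_le_mul_of_nonneg_right c3 hhypos.le
    exact ⟨⟨by linarith, by linarith⟩, by linarith, by linarith⟩
  -- near cells intersect
  have hseg : ∀ (e h : ℝ) (i j : ℤ), 0 < h → j ≤ i + 1 → i ≤ j + 1 →
      ∃ x : ℝ, (e + (i:ℝ) * h ≤ x ∧ x ≤ e + ((i:ℝ) + 1) * h) ∧
        (e + (j:ℝ) * h ≤ x ∧ x ≤ e + ((j:ℝ) + 1) * h) := by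
    intro e h i j hh h1 h2
    have cil : (i:ℝ) ≤ ((max i j : ℤ) : ℝ) := by exact_mod_cast le_max_left i j
    have cjl : (j:ℝ) ≤ ((max i j : ℤ) : ℝ) := by exact_mod_cast le_max_right i j
    have ciu : ((max i j : ℤ) : ℝ) ≤ (i:ℝ) + 1 := by
      exact_mod_cast (by omega : max i j ≤ i + 1)
    have cju : ((max i j : ℤ) : ℝ) ≤ (j:ℝ) + 1 := by
      exact_mod_cast (by omega : max i j ≤ j + 1)
    have m0 := mul_le_mul_of_nonneg_right cil hh.le
    have m1 := mul_le_mul_of_nonneg_right cjl hh.le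
    have m2 := mul_le_mul_of_nonneg_right ciu hh.le
    have m3 := mul_le_mul_of_nonneg_right cju hh.le
    exact ⟨e + ((max i j : ℤ) : ℝ) * h, ⟨by linarith, by linarith⟩, by linarith, by linarith⟩
  have hmeet : ∀ p q : ℤ × ℤ, q.1 ≤ p.1 + 1 → p.1 ≤ q.1 + 1 → q.2 ≤ p.2 + 1 → p.2 ≤ q.2 + 1 →
      (cell p ∩ cell q).Nonempty := by
    rintro ⟨p1, p2⟩ ⟨q1, q2⟩ h1 h2 h3 h4
    obtain ⟨x, hxp, hxq⟩ := hseg a hx p1 q1 hhxpos h1 h2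
    obtain ⟨z, hzp, hzq⟩ := hseg c hy p2 q2 hhypos h3 h4
    exact ⟨(x, z), ⟨⟨hxp.1, hxp.2⟩, hzp.1, hzp.2⟩, ⟨hxq.1, hxq.2⟩, hzq.1, hzq.2⟩
  set Sc : ℤ × ℤ → Prop := fun p => (cell p ∩ U).Nonempty ∨ (cell p ∩ V).Nonempty with hScdef
  have hcellK : ∀ p : ℤ × ℤ, ¬ Sc p → ∀ z ∈ cell p, z ∉ K := by
    intro p hS z hz hzK
    rw [← hUV] at hzK
    rcases hzK with h | h
    · exact hS (Or.inl ⟨z, hz, h⟩)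
    · exact hS (Or.inr ⟨z, hz, h⟩)
  by_cases hreach : ∃ i : ℤ, HexWalk.Reach Sc (N:ℤ) (N:ℤ) (i, (N:ℤ) - 1)
  · -- a rook path of free cells from bottom to top: contradiction with IVT
    obtain ⟨i₀, hi₀⟩ := hreach
    have hbuild : ∀ p, HexWalk.Reach Sc (N:ℤ) (N:ℤ) p → ∃ C : Set (ℝ × ℝ),
        IsConnected C ∧ C ⊆ R ∧ (∀ z ∈ C, z ∉ K) ∧ (∃ w ∈ C, w.2 = c) ∧ cell p ⊆ C := by
      intro p hp
      induction hp with
      | base i h0 h1 hS =>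
        have hgrid0 : HexWalk.inGrid (N:ℤ) (N:ℤ) (i, 0) := ⟨h0, h1, le_rfl, by omega⟩
        have hpt : ((a + (i:ℝ) * hx, c) : ℝ × ℝ) ∈ cell (i, 0) := by
          refine ⟨⟨le_rfl, by simp; linarith⟩, ?_, ?_⟩ <;> simp [hhypos.le]
        refine ⟨cell (i, 0), ?_, hcellR _ hgrid0, fun z hz => hcellK _ hS z hz,
          ⟨(a + (i:ℝ) * hx, c), hpt, rfl⟩, subset_rfl⟩
        exact Convex.isConnected ((convex_Icc _ _).prod (convex_Icc _ _)) ⟨_, hpt⟩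
      | step p q hq hgp hSp hadj IH =>
        obtain ⟨C, hCconn, hCR, hCK, hCbot, hCq⟩ := IH
        have hb : q.1 ≤ p.1 + 1 ∧ p.1 ≤ q.1 + 1 ∧ q.2 ≤ p.2 + 1 ∧ p.2 ≤ q.2 + 1 := by
          rcases hadj with ⟨h, h'⟩ | ⟨h, h'⟩ <;> rcases h' with h' | h' <;> omega
        obtain ⟨z, hz1, hz2⟩ := hmeet p q hb.1 hb.2.1 hb.2.2.1 hb.2.2.2
        have hcellconn : IsConnected (cell p) :=
          Convex.isConnected ((convex_Icc _ _).prod (convex_Icc _ _)) ⟨z, hz1⟩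
        refine ⟨C ∪ cell p, hCconn.union ⟨z, hCq hz2, hz1⟩ hcellconn,
          union_subset hCR (hcellR _ hgp), ?_, ?_, subset_union_right⟩
        · rintro w (hw | hw)
          · exact hCK w hw
          · exact hcellK _ hSp w hw
        · obtain ⟨w, hw1, hw2⟩ := hCbot
          exact ⟨w, Or.inl hw1, hw2⟩
    obtain ⟨C, hCconn, hCR, hCK, ⟨u, huC, hu2⟩, hCtop⟩ := hbuild _ hi₀
    have hiG : HexWalk.inGrid (N:ℤ) (N:ℤ) (i₀, (N:ℤ) - 1) := HexWalk.reach_inGrid hN1 hi₀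
    have hw : ((a + (i₀:ℝ) * hx, d) : ℝ × ℝ) ∈ cell (i₀, (N:ℤ) - 1) := by
      have e1 : c + (((N:ℤ) - 1 : ℤ) : ℝ) * hy + hy = d := by
        push_cast
        linarith [hNhy]
      refine ⟨⟨le_rfl, by simp; linarith⟩, ?_, ?_⟩
      · simp only
        linarith
      · simp only
        linarith
    have hwC := hCtop hw
    have hFu : F u = θ₀ := by
      have he : u = (u.1, c) := Prod.ext rfl hu2
      rw [he]
      exact hbot u.1 (hCR huC).1
    have hFw : F (a + (i₀:ℝ) * hx, d) = θ₁ := htop _ (hCR hwC).1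
    have hθmem : θ ∈ Icc (F u) (F (a + (i₀:ℝ) * hx, d)) := by
      rw [hFu, hFw]; exact ⟨hθ₀.le, hθ₁.le⟩
    obtain ⟨z, hzC, hzθ⟩ :=
      hCconn.isPreconnected.intermediate_value huC hwC (hF.mono hCR) hθmem
    exact hCK z hzC ⟨hCR hzC, hzθ⟩
  · push_neg at hreach
    obtain ⟨k₁, k₂, g, hk12, hgrid, hnear, hg1, hg2⟩ :=
      HexWalk.hex (S := Sc) (m := (N:ℤ)) (n := (N:ℤ)) hN1 hN1 hreach
    -- cells in column 0 cannot meet V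
    have hcol0 : ∀ k, k₁ ≤ k → k ≤ k₂ → (g k).1 = 0 → ¬ (cell (g k) ∩ V).Nonempty := by
      rintro k hk1 hk2 h0 ⟨v, hvc, hvV⟩
      have hvR : v ∈ R := hcellR _ (hgrid k hk1 hk2).1 hvc
      have hm1 : a + (((g k).1 : ℤ) : ℝ) * hx ≤ v.1 := hvc.1.1
      have hm2 : v.1 ≤ a + ((((g k).1 : ℤ) : ℝ) + 1) * hx := hvc.1.2
      rw [h0] at hm1 hm2
      push_cast at hm1 hm2
      have hwL : ((a, v.2) : ℝ × ℝ) ∈ L := ⟨rfl, hvR.2⟩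
      refine hd₂ v hvV _ hwL ?_
      rw [Prod.dist_eq]
      apply max_lt
      · rw [Real.dist_eq, abs_lt]
        constructor <;> linarith
      · simpa using hδ₂pos
    -- cells in column N - 1 cannot meet U
    have hcolm : ∀ k, k₁ ≤ k → k ≤ k₂ → (g k).1 = (N:ℤ) - 1 →
        ¬ (cell (g k) ∩ U).Nonempty := by
      rintro k hk1 hk2 h0 ⟨u, huc, huU⟩
      have huR : u ∈ R := hcellR _ (hgrid k hk1 hk2).1 huc
      have hm1 : a + (((g k).1 : ℤ) : ℝ) * hx ≤ u.1 := huc.1.1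
      have hm2 : u.1 ≤ a + ((((g k).1 : ℤ) : ℝ) + 1) * hx := huc.1.2
      rw [h0] at hm1 hm2
      push_cast at hm1 hm2
      have hwRt : ((b, u.2) : ℝ × ℝ) ∈ Rt := ⟨rfl, huR.2⟩
      refine hd₃ u huU _ hwRt ?_
      rw [Prod.dist_eq]
      apply max_lt
      · rw [Real.dist_eq, abs_lt]
        constructor <;> linarith
      · simpa using hδ₃pos
    -- the first cell along the path which meets V
    have hQ : ∃ k, k₁ ≤ k ∧ k ≤ k₂ ∧ (cell (g k) ∩ V).Nonempty := by
      refine ⟨k₂, hk12, le_rfl, ?_⟩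
      rcases (hgrid k₂ hk12 le_rfl).2 with h | h
      · exact absurd h (hcolm k₂ hk12 le_rfl hg2)
      · exact h
    set k' := Nat.find hQ with hk'def
    have hk'spec := Nat.find_spec hQ
    have hk'min : ∀ j, j < k' → ¬ (k₁ ≤ j ∧ j ≤ k₂ ∧ (cell (g j) ∩ V).Nonempty) :=
      fun j hj => Nat.find_min hQ hj
    have hk'gt : k₁ < k' := by
      rcases Nat.lt_or_ge k₁ k' with h | h
      · exact h
      · exfalso
        have he : k' = k₁ := le_antisymm (le_trans le_rfl h) hk'spec.1
        exact hcol0 k₁ le_rfl hk12 hg1 (he ▸ hk'spec.2.2)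
    have hU' : (cell (g (k' - 1)) ∩ U).Nonempty := by
      rcases (hgrid (k' - 1) (by omega) (by omega)).2 with h | h
      · exact h
      · exact absurd ⟨by omega, by omega, h⟩ (hk'min (k' - 1) (by omega))
    obtain ⟨u, huc, huU⟩ := hU'
    obtain ⟨v, hvc, hvV⟩ := hk'spec.2.2
    have hnear' := hnear (k' - 1) (by omega) (by omega)
    rw [(by omega : k' - 1 + 1 = k')] at hnear'
    obtain ⟨hn1, hn2, hn3, hn4⟩ := hnear'
    -- coordinate bounds
    have hu1 : a + ((((g (k' - 1)).1 : ℤ) : ℝ)) * hx ≤ u.1 := huc.1.1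
    have hu2 : u.1 ≤ a + ((((g (k' - 1)).1 : ℤ) : ℝ) + 1) * hx := huc.1.2
    have hu3 : c + ((((g (k' - 1)).2 : ℤ) : ℝ)) * hy ≤ u.2 := huc.2.1
    have hu4 : u.2 ≤ c + ((((g (k' - 1)).2 : ℤ) : ℝ) + 1) * hy := huc.2.2
    have hv1 : a + ((((g k').1 : ℤ) : ℝ)) * hx ≤ v.1 := hvc.1.1
    have hv2 : v.1 ≤ a + ((((g k').1 : ℤ) : ℝ) + 1) * hx := hvc.1.2
    have hv3 : c + ((((g k').2 : ℤ) : ℝ)) * hy ≤ v.2 := hvc.2.1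
    have hv4 : v.2 ≤ c + ((((g k').2 : ℤ) : ℝ) + 1) * hy := hvc.2.2
    have c1 : (((g k').1 : ℤ) : ℝ) ≤ (((g (k' - 1)).1 : ℤ) : ℝ) + 1 := by exact_mod_cast hn1
    have c2 : (((g (k' - 1)).1 : ℤ) : ℝ) ≤ (((g k').1 : ℤ) : ℝ) + 1 := by exact_mod_cast hn2
    have c3 : (((g k').2 : ℤ) : ℝ) ≤ (((g (k' - 1)).2 : ℤ) : ℝ) + 1 := by exact_mod_cast hn3
    have c4 : (((g (k' - 1)).2 : ℤ) : ℝ) ≤ (((g k').2 : ℤ) : ℝ) + 1 := by exact_mod_cast hn4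
    have hp1 := mul_le_mul_of_nonneg_right c1 hhxpos.le
    have hp2 := mul_le_mul_of_nonneg_right c2 hhxpos.le
    have hp3 := mul_le_mul_of_nonneg_right c3 hhypos.le
    have hp4 := mul_le_mul_of_nonneg_right c4 hhypos.le
    refine hd₁ u huU v hvV ?_
    rw [Prod.dist_eq]
    apply max_lt
    · rw [Real.dist_eq, abs_lt]
      constructor <;>
        linarith only [hu1, hu2, hv1, hv2, hp1, hp2, hhxρ, hρ₁, hρpos, hδ₁pos]
    · rw [Real.dist_eq, abs_lt]
      constructor <;>
        linarith only [hu3, hu4, hv3, hv4, hp3, hp4, hhyρ, hρ₁, hρpos, hδ₁pos]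
end

section
/- Let a<b, c<d be real and F=(F₁,F₂):[a,b]×[c,d]→ℝ² continuous with F₁(a,t)<0 and F₁(b,t)>0 for all t∈[c,d], and F₂(s,c)<0 and F₂(s,d)>0 for all s∈[a,b]. Then there exists (s₀,t₀)∈(a,b)×(c,d) with F(s₀,t₀)=(0,0). -/
open Set

lemma pm_sin_nonpos {t : ℝ} (h1 : -Real.pi ≤ t) (h2 : t ≤ 0) : Real.sin t ≤ 0 := by
  have h := Real.sin_nonneg_of_nonneg_of_le_pi (x := -t) (by linarith) (by linarith)
  rw [Real.sin_neg] at h; linarith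

lemma pm_invariant_step {x y : ℝ} (hx1 : 0 < x) (hx2 : x < Real.pi)
    (hxy : |y - x| < Real.pi / 2) (hy : 0 < Real.sin y) : 0 < y ∧ y < Real.pi := by
  have hπ := Real.pi_pos
  rw [abs_lt] at hxy
  constructor
  · by_contra hc; push_neg at hc
    have := pm_sin_nonpos (t := y) (by linarith) hc
    linarith
  · by_contra hc; push_neg at hc
    have h2 : 0 ≤ Real.sin (y - Real.pi) :=
      Real.sin_nonneg_of_nonneg_of_le_pi (by linarith) (by linarith)
    rw [Real.sin_sub_pi] at h2; linarith

lemma pm_corner_step {x : ℝ} (h1 : -(Real.pi/2) < x) (h2 : x < Real.pi/2)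
    (hs : 0 < Real.sin x) : 0 < x ∧ x < Real.pi := by
  have hπ := Real.pi_pos
  refine ⟨?_, by linarith⟩
  by_contra hc; push_neg at hc
  have := pm_sin_nonpos (t := x) (by linarith) hc
  linarith

lemma pm_edge (ψ : ℕ → ℝ) (n : ℕ) (h0 : 0 < ψ 0 ∧ ψ 0 < Real.pi)
    (hstep : ∀ k, k < n → |ψ (k+1) - ψ k| < Real.pi / 2)
    (hsin : ∀ k, k ≤ n → 0 < Real.sin (ψ k)) : 0 < ψ n ∧ ψ n < Real.pi := by
  suffices h : ∀ k, k ≤ n → 0 < ψ k ∧ ψ k < Real.pi from h n le_rfl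
  intro k hk
  induction k with
  | zero => exact h0
  | succ k ih =>
    obtain ⟨l, r⟩ := ih (by omega)
    exact pm_invariant_step l r (hstep k (by omega)) (hsin _ hk)

lemma pm_ratio_re_pos {z w : ℂ} (hz : z ≠ 0) (h : ‖(w - z)‖ < ‖z‖) :
    0 < (w / z).re := by
  have hz2 : 0 < Complex.normSq z := Complex.normSq_pos.mpr hz
  have h2 : Complex.normSq (w - z) < Complex.normSq z := by
    have e1 : Complex.normSq (w - z) = (‖(w-z)‖)^2 := (Complex.sq_norm _).symm
    have e2 : Complex.normSq z = (‖z‖)^2 := (Complex.sq_norm _).symm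
    rw [e1, e2]
    have := norm_nonneg (w - z)
    nlinarith
  have hN : 0 < w.re * z.re + w.im * z.im := by
    simp only [Complex.normSq_sub, Complex.normSq_apply, Complex.sub_re, Complex.sub_im] at h2 ⊢
    nlinarith [sq_nonneg w.re, sq_nonneg w.im, sq_nonneg (w.re - z.re), sq_nonneg (w.im - z.im)]
  rw [Complex.div_re, ← add_div]
  exact div_pos hN hz2

lemma pm_lift (g : ℕ → ℂ) (N : ℕ) (hg : ∀ i, i ≤ N → g i ≠ 0) :
    ∀ k, k ≤ N → Complex.exp ((((g 0).arg + ∑ i ∈ Finset.range k, ((g (i+1)) / g i).arg : ℝ) : ℂ) * Complex.I)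
      = g k / (‖(g k)‖ : ℂ) := by
  intro k hk
  induction k with
  | zero =>
    have h0 : g 0 ≠ 0 := hg 0 (by omega)
    have habs : (‖(g 0)‖ : ℂ) ≠ 0 := by
      simpa using norm_ne_zero_iff.mpr h0
    have h := Complex.norm_mul_exp_arg_mul_I (g 0)
    simp only [Finset.range_zero, Finset.sum_empty, add_zero]
    rw [eq_div_iff habs, mul_comm]
    exact h
  | succ k ih =>
    have hk' : k ≤ N := by omega
    have ihk := ih hk'
    have hgk : g k ≠ 0 := hg k hk'
    have hgk1 : g (k+1) ≠ 0 := hg (k+1) hk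
    have habsk : (‖(g k)‖ : ℂ) ≠ 0 := by simpa using norm_ne_zero_iff.mpr hgk
    have habsk1 : (‖(g (k+1))‖ : ℂ) ≠ 0 := by simpa using norm_ne_zero_iff.mpr hgk1
    have hr : g (k+1) / g k ≠ 0 := div_ne_zero hgk1 hgk
    have habsr : (‖(g (k+1) / g k)‖ : ℂ) ≠ 0 := by simpa using norm_ne_zero_iff.mpr hr
    have hsplit : ((((g 0).arg + ∑ i ∈ Finset.range (k+1), ((g (i+1)) / g i).arg : ℝ)) : ℂ) * Complex.I
        = (((g 0).arg + ∑ i ∈ Finset.range k, ((g (i+1)) / g i).arg : ℝ) : ℂ) * Complex.I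
          + ((((g (k+1)) / g k).arg : ℝ) : ℂ) * Complex.I := by
      rw [Finset.sum_range_succ]; push_cast; ring
    rw [hsplit, Complex.exp_add, ihk]
    have hexp : Complex.exp ((((g (k+1)) / g k).arg : ℂ) * Complex.I)
        = (g (k+1) / g k) / (‖(g (k+1) / g k)‖ : ℂ) := by
      rw [eq_div_iff habsr, mul_comm]
      exact Complex.norm_mul_exp_arg_mul_I _
    rw [hexp, norm_div]
    push_cast
    field_simp

lemma pm_polar {z : ℂ} {φ : ℝ} (hz : z ≠ 0)
    (h : Complex.exp ((φ : ℂ) * Complex.I) = z / (‖z‖ : ℂ)) :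
    z.im = ‖z‖ * Real.sin φ ∧ z.re = ‖z‖ * Real.cos φ := by
  have habs : (‖z‖ : ℂ) ≠ 0 := by simpa using norm_ne_zero_iff.mpr hz
  have hz' : z = (‖z‖ : ℂ) * Complex.exp ((φ : ℂ) * Complex.I) := by
    rw [h]; field_simp
  constructor
  · conv_lhs => rw [hz']
    simp [Complex.mul_im, Complex.exp_ofReal_mul_I_im, Complex.exp_ofReal_mul_I_re]
  · conv_lhs => rw [hz']
    simp [Complex.mul_re, Complex.exp_ofReal_mul_I_im, Complex.exp_ofReal_mul_I_re]

set_option maxHeartbeats 1000000 in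
/-- Poincaré–Miranda theorem in dimension 2. -/
theorem stmt_1 (a b c d : ℝ) (hab : a < b) (hcd : c < d)
    (F : ℝ × ℝ → ℝ × ℝ) (hF : ContinuousOn F (Icc a b ×ˢ Icc c d))
    (h1a : ∀ t ∈ Icc c d, (F (a, t)).1 < 0)
    (h1b : ∀ t ∈ Icc c d, 0 < (F (b, t)).1)
    (h2c : ∀ s ∈ Icc a b, (F (s, c)).2 < 0)
    (h2d : ∀ s ∈ Icc a b, 0 < (F (s, d)).2) :
    ∃ s₀ ∈ Ioo a b, ∃ t₀ ∈ Ioo c d, F (s₀, t₀) = (0, 0) := by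
  by_contra hcon
  push_neg at hcon
  have hπ := Real.pi_pos
  set R : Set (ℝ × ℝ) := Icc a b ×ˢ Icc c d with hR
  have hRc : IsCompact R := isCompact_Icc.prod isCompact_Icc
  have hacR : (a, c) ∈ R := by
    refine ⟨⟨le_rfl, hab.le⟩, ⟨le_rfl, hcd.le⟩⟩
  set f : ℝ × ℝ → ℂ := fun x => ((F x).1 : ℂ) + ((F x).2 : ℂ) * Complex.I with hf
  have fre : ∀ x, (f x).re = (F x).1 := by intro x; simp [hf]
  have fim : ∀ x, (f x).im = (F x).2 := by intro x; simp [hf]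
  have hfc : ContinuousOn f R := by
    apply ContinuousOn.add
    · exact Complex.continuous_ofReal.comp_continuousOn hF.fst
    · exact (Complex.continuous_ofReal.comp_continuousOn hF.snd).mul continuousOn_const
  -- f is nonvanishing on R
  have hne : ∀ x ∈ R, f x ≠ 0 := by
    intro x hx hfx
    obtain ⟨hx1, hx2⟩ := hx
    have hF1 : (F x).1 = 0 := by rw [← fre x, hfx]; rfl
    have hF2 : (F x).2 = 0 := by rw [← fim x, hfx]; rfl
    have hxx : (x.1, x.2) = x := rfl
    have hxa : x.1 ≠ a := by
      intro he
      have := h1a x.2 hx2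
      rw [← he, hxx] at this
      linarith
    have hxb : x.1 ≠ b := by
      intro he
      have := h1b x.2 hx2
      rw [← he, hxx] at this
      linarith
    have hxc : x.2 ≠ c := by
      intro he
      have := h2c x.1 hx1
      rw [← he, hxx] at this
      linarith
    have hxd : x.2 ≠ d := by
      intro he
      have := h2d x.1 hx1
      rw [← he, hxx] at this
      linarith
    exact hcon x.1 ⟨lt_of_le_of_ne hx1.1 (Ne.symm hxa), lt_of_le_of_ne hx1.2 hxb⟩
      x.2 ⟨lt_of_le_of_ne hx2.1 (Ne.symm hxc), lt_of_le_of_ne hx2.2 hxd⟩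
      (by rw [hxx]; exact Prod.ext hF1 hF2)
  -- minimum of |f| on R
  obtain ⟨x₀, hx₀R, hx₀min⟩ := hRc.exists_isMinOn ⟨(a, c), hacR⟩
    (continuous_norm.comp_continuousOn hfc)
  set m : ℝ := ‖(f x₀)‖ with hm_def
  have hm : 0 < m := norm_pos_iff.mpr (hne x₀ hx₀R)
  have hmle : ∀ y ∈ R, m ≤ ‖(f y)‖ := fun y hy => hx₀min hy
  -- uniform continuity
  have huc := hRc.uniformContinuousOn_of_continuous hfc
  rw [Metric.uniformContinuousOn_iff] at huc
  obtain ⟨δ, hδ0, hδ⟩ := huc m hm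
  -- choose n
  obtain ⟨n₀, hn₀⟩ := exists_nat_gt (max (b - a) (d - c) / δ)
  set n : ℕ := n₀ + 1 with hn_def
  have hn1 : 1 ≤ n := by omega
  have hnK : max (b - a) (d - c) / δ < (n : ℝ) := by
    rw [hn_def]; push_cast; linarith
  clear hn_def
  clear_value n
  have hn0 : (0 : ℝ) < n := by exact_mod_cast Nat.lt_of_lt_of_le Nat.zero_lt_one hn1
  have hKpos : 0 < max (b - a) (d - c) := lt_of_lt_of_le (by linarith) (le_max_left _ _)
  have hKn : max (b - a) (d - c) / n < δ := by
    rw [div_lt_iff₀ hn0]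
    rw [div_lt_iff₀ hδ0] at hnK
    linarith
  -- boundary points
  set pt : ℕ → ℝ × ℝ := fun i =>
    if i ≤ n then (a + (i : ℝ) / n * (b - a), c)
    else if i ≤ 2 * n then (b, c + ((i : ℝ) - n) / n * (d - c))
    else if i ≤ 3 * n then (b - ((i : ℝ) - 2 * n) / n * (b - a), d)
    else (a, d - ((i : ℝ) - 3 * n) / n * (d - c)) with hpt
  have hnne : (n : ℝ) ≠ 0 := ne_of_gt hn0
  have ptA : ∀ i, i ≤ n → pt i = (a + (i : ℝ) / n * (b - a), c) := by
    intro i hi; simp only [hpt]; rw [if_pos hi]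
  have ptB : ∀ i, n ≤ i → i ≤ 2 * n → pt i = (b, c + ((i : ℝ) - n) / n * (d - c)) := by
    intro i h1 h2
    rcases eq_or_lt_of_le h1 with he | hl
    · rw [← he, ptA n le_rfl, Prod.ext_iff]
      constructor
      · simp only
        field_simp; ring
      · simp only
        ring
    · have hni : ¬ i ≤ n := by omega
      simp only [hpt]; rw [if_neg hni, if_pos h2]
  have ptC : ∀ i, 2 * n ≤ i → i ≤ 3 * n → pt i = (b - ((i : ℝ) - 2 * n) / n * (b - a), d) := by
    intro i h1 h2
    rcases eq_or_lt_of_le h1 with he | hl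
    · rw [← he, ptB (2 * n) (by omega) le_rfl, Prod.ext_iff]
      constructor
      · simp only; push_cast; ring
      · simp only; push_cast; field_simp; ring
    · have hni : ¬ i ≤ n := by omega
      have hni2 : ¬ i ≤ 2 * n := by omega
      simp only [hpt]; rw [if_neg hni, if_neg hni2, if_pos h2]
  have ptD : ∀ i, 3 * n ≤ i → i ≤ 4 * n → pt i = (a, d - ((i : ℝ) - 3 * n) / n * (d - c)) := by
    intro i h1 h2
    rcases eq_or_lt_of_le h1 with he | hl
    · rw [← he, ptC (3 * n) (by omega) le_rfl, Prod.ext_iff]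
      constructor
      · simp only; push_cast; field_simp; ring
      · simp only; push_cast; ring
    · have hni : ¬ i ≤ n := by omega
      have hni2 : ¬ i ≤ 2 * n := by omega
      have hni3 : ¬ i ≤ 3 * n := by omega
      simp only [hpt]; rw [if_neg hni, if_neg hni2, if_neg hni3]
  have pt0 : pt 0 = (a, c) := by rw [ptA 0 (by omega)]; norm_num
  have ptE : pt (4 * n) = (a, c) := by
    rw [ptD (4 * n) (by omega) le_rfl, Prod.ext_iff]
    constructor
    · simp only
    · simp only; push_cast; field_simp; ring
  -- membership
  have hseg : ∀ u v t : ℝ, u ≤ v → 0 ≤ t → t ≤ 1 → u + t * (v - u) ∈ Icc u v := by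
    intro u v t h1 h2 h3
    constructor <;> nlinarith
  have hseg' : ∀ u v t : ℝ, u ≤ v → 0 ≤ t → t ≤ 1 → v - t * (v - u) ∈ Icc u v := by
    intro u v t h1 h2 h3
    constructor <;> nlinarith
  have hdiv01 : ∀ (i : ℕ) (j : ℝ), j ≤ (i : ℝ) → (i : ℝ) ≤ j + n → 0 ≤ ((i : ℝ) - j) / n ∧ ((i : ℝ) - j) / n ≤ 1 := by
    intro i j h1 h2
    constructor
    · apply div_nonneg (by linarith) hn0.le
    · rw [div_le_one hn0]; linarith
  have ptR : ∀ i, i ≤ 4 * n → pt i ∈ R := by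
    intro i hi
    rcases le_or_gt i n with h1 | h1
    · rw [ptA i h1]
      obtain ⟨d1, d2⟩ := hdiv01 i 0 (by positivity) (by simp; exact_mod_cast h1)
      rw [sub_zero] at d1 d2
      exact ⟨hseg a b _ hab.le d1 d2, ⟨le_rfl, hcd.le⟩⟩
    · rcases le_or_gt i (2 * n) with h2 | h2
      · rw [ptB i h1.le h2]
        obtain ⟨d1, d2⟩ := hdiv01 i (n : ℝ) (by exact_mod_cast h1.le)
          (by have : (i : ℝ) ≤ ((2 * n : ℕ) : ℝ) := by exact_mod_cast h2
              push_cast at this; linarith)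
        exact ⟨⟨hab.le, le_rfl⟩, hseg c d _ hcd.le d1 d2⟩
      · rcases le_or_gt i (3 * n) with h3 | h3
        · rw [ptC i h2.le h3]
          obtain ⟨d1, d2⟩ := hdiv01 i (2 * (n : ℝ))
            (by have : ((2 * n : ℕ) : ℝ) ≤ i := by exact_mod_cast h2.le
                push_cast at this; linarith)
            (by have : (i : ℝ) ≤ ((3 * n : ℕ) : ℝ) := by exact_mod_cast h3
                push_cast at this; linarith)
          exact ⟨hseg' a b _ hab.le d1 d2, ⟨hcd.le, le_rfl⟩⟩
        · rw [ptD i h3.le hi]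
          obtain ⟨d1, d2⟩ := hdiv01 i (3 * (n : ℝ))
            (by have : ((3 * n : ℕ) : ℝ) ≤ i := by exact_mod_cast h3.le
                push_cast at this; linarith)
            (by have : (i : ℝ) ≤ ((4 * n : ℕ) : ℝ) := by exact_mod_cast hi
                push_cast at this; linarith)
          exact ⟨⟨le_rfl, hab.le⟩, hseg' c d _ hcd.le d1 d2⟩
  -- step distance
  have hKn' : ∀ i, i < 4 * n → dist (pt (i + 1)) (pt i) < δ := by
    intro i hi
    have hba : 0 ≤ (b - a) / n := div_nonneg (by linarith) hn0.le
    have hdc : 0 ≤ (d - c) / n := div_nonneg (by linarith) hn0.le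
    have hbaK : (b - a) / n ≤ max (b - a) (d - c) / n := by gcongr; exact le_max_left _ _
    have hdcK : (d - c) / n ≤ max (b - a) (d - c) / n := by gcongr; exact le_max_right _ _
    have hKn0 : 0 ≤ max (b - a) (d - c) / n := le_trans hba hbaK
    have key : dist (pt (i + 1)) (pt i) ≤ max (b - a) (d - c) / n := by
      rw [Prod.dist_eq]
      rcases le_or_gt (i + 1) n with h1 | h1
      · rw [ptA (i + 1) h1, ptA i (by omega)]
        apply max_le
        · rw [Real.dist_eq]
          have e : a + ((i : ℝ) + 1) / n * (b - a) - (a + (i : ℝ) / n * (b - a)) = (b - a) / n := by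
            field_simp; ring
          simp only [Nat.cast_add, Nat.cast_one]
          rw [e, abs_of_nonneg hba]; exact hbaK
        · simp only [Real.dist_eq, sub_self, abs_zero]; exact hKn0
      · rcases le_or_gt (i + 1) (2 * n) with h2 | h2
        · rw [ptB (i + 1) (by omega) h2, ptB i (by omega) (by omega)]
          apply max_le
          · simp only [Real.dist_eq, sub_self, abs_zero]; exact hKn0
          · rw [Real.dist_eq]
            have e : c + (((i : ℝ) + 1) - n) / n * (d - c) - (c + ((i : ℝ) - n) / n * (d - c))
                = (d - c) / n := by field_simp; ring
            simp only [Nat.cast_add, Nat.cast_one]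
            rw [e, abs_of_nonneg hdc]; exact hdcK
        · rcases le_or_gt (i + 1) (3 * n) with h3 | h3
          · rw [ptC (i + 1) (by omega) h3, ptC i (by omega) (by omega)]
            apply max_le
            · rw [Real.dist_eq]
              have e : b - (((i : ℝ) + 1) - 2 * n) / n * (b - a) - (b - ((i : ℝ) - 2 * n) / n * (b - a))
                  = -((b - a) / n) := by field_simp; ring
              simp only [Nat.cast_add, Nat.cast_one]
              rw [e, abs_neg, abs_of_nonneg hba]; exact hbaK
            · simp only [Real.dist_eq, sub_self, abs_zero]; exact hKn0
          · rw [ptD (i + 1) (by omega) (by omega), ptD i (by omega) (by omega)]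
            apply max_le
            · simp only [Real.dist_eq, sub_self, abs_zero]; exact hKn0
            · rw [Real.dist_eq]
              have e : d - (((i : ℝ) + 1) - 3 * n) / n * (d - c) - (d - ((i : ℝ) - 3 * n) / n * (d - c))
                  = -((d - c) / n) := by field_simp; ring
              simp only [Nat.cast_add, Nat.cast_one]
              rw [e, abs_neg, abs_of_nonneg hdc]; exact hdcK
    exact lt_of_le_of_lt key hKn
  -- contraction toward the center
  set σ : ℝ → ℝ × ℝ → ℝ × ℝ :=
    fun u q => ((1 - u) * ((a + b) / 2) + u * q.1, (1 - u) * ((c + d) / 2) + u * q.2) with hσ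
  have σ1 : ∀ q, σ 1 q = q := by
    intro q; simp only [hσ]; rw [Prod.ext_iff]; constructor <;> simp
  have σR : ∀ u ∈ Icc (0:ℝ) 1, ∀ q ∈ R, σ u q ∈ R := by
    rintro u ⟨hu0, hu1⟩ q ⟨⟨hq1a, hq1b⟩, hq2c, hq2d⟩
    have g1 : 0 ≤ (1-u) * ((a+b)/2 - a) := mul_nonneg (by linarith) (by linarith)
    have g2 : 0 ≤ u * (q.1 - a) := mul_nonneg hu0 (by linarith)
    have g3 : 0 ≤ (1-u) * (b - (a+b)/2) := mul_nonneg (by linarith) (by linarith)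
    have g4 : 0 ≤ u * (b - q.1) := mul_nonneg hu0 (by linarith)
    have g5 : 0 ≤ (1-u) * ((c+d)/2 - c) := mul_nonneg (by linarith) (by linarith)
    have g6 : 0 ≤ u * (q.2 - c) := mul_nonneg hu0 (by linarith)
    have g7 : 0 ≤ (1-u) * (d - (c+d)/2) := mul_nonneg (by linarith) (by linarith)
    have g8 : 0 ≤ u * (d - q.2) := mul_nonneg hu0 (by linarith)
    refine ⟨⟨?_, ?_⟩, ⟨?_, ?_⟩⟩ <;> simp only [hσ] <;> nlinarith
  have σd : ∀ u ∈ Icc (0:ℝ) 1, ∀ p q : ℝ × ℝ, dist (σ u p) (σ u q) ≤ dist p q := by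
    rintro u ⟨hu0, hu1⟩ p q
    have hu : |u| ≤ 1 := abs_le.mpr ⟨by linarith, hu1⟩
    rw [Prod.dist_eq, Prod.dist_eq]
    apply max_le
    · simp only [hσ, Real.dist_eq]
      have e : (1 - u) * ((a + b) / 2) + u * p.1 - ((1 - u) * ((a + b) / 2) + u * q.1)
          = u * (p.1 - q.1) := by ring
      rw [e, abs_mul]
      calc |u| * |p.1 - q.1| ≤ 1 * |p.1 - q.1| := by gcongr
        _ = |p.1 - q.1| := one_mul _
        _ ≤ max |p.1 - q.1| |p.2 - q.2| := le_max_left _ _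
    · simp only [hσ, Real.dist_eq]
      have e : (1 - u) * ((c + d) / 2) + u * p.2 - ((1 - u) * ((c + d) / 2) + u * q.2)
          = u * (p.2 - q.2) := by ring
      rw [e, abs_mul]
      calc |u| * |p.2 - q.2| ≤ 1 * |p.2 - q.2| := by gcongr
        _ = |p.2 - q.2| := one_mul _
        _ ≤ max |p.1 - q.1| |p.2 - q.2| := le_max_right _ _
  set z : ℝ → ℕ → ℂ := fun u i => f (σ u (pt i)) with hz
  have zmem : ∀ u ∈ Icc (0:ℝ) 1, ∀ i, i ≤ 4 * n → σ u (pt i) ∈ R :=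
    fun u hu i hi => σR u hu _ (ptR i hi)
  have zne : ∀ u ∈ Icc (0:ℝ) 1, ∀ i, i ≤ 4 * n → z u i ≠ 0 :=
    fun u hu i hi => hne _ (zmem u hu i hi)
  have zabs : ∀ u ∈ Icc (0:ℝ) 1, ∀ i, i ≤ 4 * n → m ≤ ‖(z u i)‖ :=
    fun u hu i hi => hmle _ (zmem u hu i hi)
  have zstep : ∀ u ∈ Icc (0:ℝ) 1, ∀ i, i < 4 * n →
      ‖(z u (i + 1) - z u i)‖ < m := by
    intro u hu i hi
    have h1 := hδ (σ u (pt (i + 1))) (zmem u hu (i + 1) (by omega)) (σ u (pt i))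
      (zmem u hu i (by omega))
      (lt_of_le_of_lt (σd u hu _ _) (hKn' i hi))
    rw [Complex.dist_eq] at h1
    exact h1
  have zre : ∀ u ∈ Icc (0:ℝ) 1, ∀ i, i < 4 * n → 0 < (z u (i + 1) / z u i).re := by
    intro u hu i hi
    exact pm_ratio_re_pos (zne u hu i (by omega))
      (lt_of_lt_of_le (zstep u hu i hi) (zabs u hu i (by omega)))
  set S : ℝ → ℝ := fun u => ∑ i ∈ Finset.range (4 * n), ((z u (i + 1)) / z u i).arg with hS
  -- continuity of S
  have hScont : ContinuousOn S (Icc 0 1) := by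
    apply continuousOn_finset_sum
    intro i hi
    rw [Finset.mem_range] at hi
    have hσc : ∀ j, Continuous (fun u : ℝ => σ u (pt j)) := by
      intro j
      simp only [hσ]
      fun_prop
    have hzc : ∀ j, j ≤ 4 * n → ContinuousOn (fun u => z u j) (Icc (0:ℝ) 1) := by
      intro j hj
      exact hfc.comp (hσc j).continuousOn (fun u hu => zmem u hu j hj)
    have hratio : ContinuousOn (fun u => z u (i + 1) / z u i) (Icc (0:ℝ) 1) :=
      (hzc (i + 1) (by omega)).div (hzc i (by omega)) (fun u hu => zne u hu i (by omega))
    intro u hu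
    exact ContinuousAt.comp_continuousWithinAt (g := Complex.arg)
      (f := fun v => z v (i + 1) / z v i) (Complex.continuousAt_arg (Or.inl (zre u hu i hi)))
      (hratio u hu)
  -- S u is a multiple of 2π
  have hS2pi : ∀ u ∈ Icc (0:ℝ) 1, ∃ k : ℤ, S u = k * (2 * Real.pi) := by
    intro u hu
    have hlift := pm_lift (z u) (4 * n) (fun i hi => zne u hu i hi) (4 * n) le_rfl
    have hlift0 := pm_lift (z u) (4 * n) (fun i hi => zne u hu i hi) 0 (by omega)
    simp only [Finset.range_zero, Finset.sum_empty, add_zero] at hlift0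
    have hz40 : z u (4 * n) = z u 0 := by
      simp only [hz]
      rw [ptE, pt0]
    rw [hz40] at hlift
    have he : Complex.exp (((S u : ℝ) : ℂ) * Complex.I) = 1 := by
      have e1 : ((((z u 0).arg + S u : ℝ)) : ℂ) * Complex.I
          = ((S u : ℝ) : ℂ) * Complex.I + (((z u 0).arg : ℝ) : ℂ) * Complex.I := by
        push_cast; ring
      have hfold : ∑ i ∈ Finset.range (4 * n), ((z u (i + 1)) / z u i).arg = S u := by
        simp only [hS]
      rw [hfold] at hlift
      rw [e1] at hlift
      rw [Complex.exp_add] at hlift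
      rw [hlift0] at hlift
      have hb : z u 0 / (‖(z u 0)‖ : ℂ) ≠ 0 :=
        div_ne_zero (zne u hu 0 (by omega))
          (by simpa using norm_ne_zero_iff.mpr (zne u hu 0 (by omega)))
      exact mul_right_cancel₀ hb (by rw [one_mul]; exact hlift)
    rw [Complex.exp_eq_one_iff] at he
    obtain ⟨k, hk⟩ := he
    refine ⟨k, ?_⟩
    have h2 : ((S u : ℝ) : ℂ) * Complex.I = ((k : ℂ) * (2 * (Real.pi : ℂ))) * Complex.I := by
      rw [hk]; ring
    have h3 := mul_right_cancel₀ Complex.I_ne_zero h2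
    exact_mod_cast h3
  -- S 0 = 0
  have h0mem : (0:ℝ) ∈ Icc (0:ℝ) 1 := ⟨le_rfl, zero_le_one⟩
  have h1mem : (1:ℝ) ∈ Icc (0:ℝ) 1 := ⟨zero_le_one, le_rfl⟩
  have hS0 : S 0 = 0 := by
    simp only [hS]
    apply Finset.sum_eq_zero
    intro i hi
    rw [Finset.mem_range] at hi
    have hc : z 0 (i + 1) = z 0 i := by
      simp only [hz, hσ]
      norm_num
    rw [hc, div_self (zne 0 h0mem i (by omega))]
    exact Complex.arg_one
  -- the lift along the boundary at u = 1
  have hz1 : ∀ k, z 1 k = f (pt k) := by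
    intro k; simp only [hz]; rw [σ1]
  have hbot : ∀ k, k ≤ n → (z 1 k).im < 0 := by
    intro k hk
    rw [hz1 k, fim, ptA k hk]
    obtain ⟨d1, d2⟩ := hdiv01 k 0 (by positivity) (by simp; exact_mod_cast hk)
    rw [sub_zero] at d1 d2
    exact h2c _ (hseg a b _ hab.le d1 d2)
  have hright : ∀ k, n ≤ k → k ≤ 2 * n → 0 < (z 1 k).re := by
    intro k hk1 hk2
    rw [hz1 k, fre, ptB k hk1 hk2]
    obtain ⟨d1, d2⟩ := hdiv01 k (n : ℝ) (by exact_mod_cast hk1)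
      (by have : (k : ℝ) ≤ ((2 * n : ℕ) : ℝ) := by exact_mod_cast hk2
          push_cast at this; linarith)
    exact h1b _ (hseg c d _ hcd.le d1 d2)
  have htop : ∀ k, 2 * n ≤ k → k ≤ 3 * n → 0 < (z 1 k).im := by
    intro k hk1 hk2
    rw [hz1 k, fim, ptC k hk1 hk2]
    obtain ⟨d1, d2⟩ := hdiv01 k (2 * (n : ℝ))
      (by have : ((2 * n : ℕ) : ℝ) ≤ k := by exact_mod_cast hk1
          push_cast at this; linarith)
      (by have : (k : ℝ) ≤ ((3 * n : ℕ) : ℝ) := by exact_mod_cast hk2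
          push_cast at this; linarith)
    exact h2d _ (hseg' a b _ hab.le d1 d2)
  have hleft : ∀ k, 3 * n ≤ k → k ≤ 4 * n → (z 1 k).re < 0 := by
    intro k hk1 hk2
    rw [hz1 k, fre, ptD k hk1 hk2]
    obtain ⟨d1, d2⟩ := hdiv01 k (3 * (n : ℝ))
      (by have : ((3 * n : ℕ) : ℝ) ≤ k := by exact_mod_cast hk1
          push_cast at this; linarith)
      (by have : (k : ℝ) ≤ ((4 * n : ℕ) : ℝ) := by exact_mod_cast hk2
          push_cast at this; linarith)
    exact h1a _ (hseg' c d _ hcd.le d1 d2)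
  set Φ : ℕ → ℝ := fun k => (z 1 0).arg + ∑ i ∈ Finset.range k, ((z 1 (i + 1)) / z 1 i).arg
    with hΦ
  have hexpΦ : ∀ k, k ≤ 4 * n →
      Complex.exp (((Φ k : ℝ) : ℂ) * Complex.I) = z 1 k / (‖(z 1 k)‖ : ℂ) := by
    intro k hk
    have := pm_lift (z 1) (4 * n) (fun i hi => zne 1 h1mem i hi) k hk
    simp only [hΦ]
    exact this
  have habsΦ : ∀ k, k ≤ 4 * n → 0 < ‖(z 1 k)‖ :=
    fun k hk => norm_pos_iff.mpr (zne 1 h1mem k hk)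
  have hpol : ∀ k, k ≤ 4 * n → (z 1 k).im = ‖(z 1 k)‖ * Real.sin (Φ k)
      ∧ (z 1 k).re = ‖(z 1 k)‖ * Real.cos (Φ k) :=
    fun k hk => pm_polar (zne 1 h1mem k hk) (hexpΦ k hk)
  have hsinΦb : ∀ k, k ≤ n → Real.sin (Φ k) < 0 := by
    intro k hk
    have h1 := (hpol k (by omega)).1
    have h2 := hbot k hk
    have h3 := habsΦ k (by omega)
    nlinarith
  have hcosΦr : ∀ k, n ≤ k → k ≤ 2 * n → 0 < Real.cos (Φ k) := by
    intro k hk1 hk2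
    have h1 := (hpol k (by omega)).2
    have h2 := hright k hk1 hk2
    have h3 := habsΦ k (by omega)
    nlinarith
  have hsinΦt : ∀ k, 2 * n ≤ k → k ≤ 3 * n → 0 < Real.sin (Φ k) := by
    intro k hk1 hk2
    have h1 := (hpol k (by omega)).1
    have h2 := htop k hk1 hk2
    have h3 := habsΦ k (by omega)
    nlinarith
  have hcosΦl : ∀ k, 3 * n ≤ k → k ≤ 4 * n → Real.cos (Φ k) < 0 := by
    intro k hk1 hk2
    have h1 := (hpol k (by omega)).2
    have h2 := hleft k hk1 hk2
    have h3 := habsΦ k (by omega)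
    nlinarith
  have hstepΦ : ∀ k, k < 4 * n → |Φ (k + 1) - Φ k| < Real.pi / 2 := by
    intro k hk
    have e : Φ (k + 1) - Φ k = ((z 1 (k + 1)) / z 1 k).arg := by
      simp only [hΦ, Finset.sum_range_succ]; ring
    rw [e]
    exact Complex.abs_arg_lt_pi_div_two_iff.mpr (Or.inl (zre 1 h1mem k hk))
  have hΦ00 : Φ 0 = (z 1 0).arg := by simp [hΦ]
  have hS1 : S 1 = Φ (4 * n) - Φ 0 := by
    simp only [hS, hΦ]; ring
  clear_value Φ S
  have hΦ0neg : -Real.pi < Φ 0 ∧ Φ 0 < 0 := by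
    constructor
    · rw [hΦ00]; exact Complex.neg_pi_lt_arg _
    · by_contra hc; push_neg at hc
      have hle : Φ 0 ≤ Real.pi := by rw [hΦ00]; exact Complex.arg_le_pi _
      have := Real.sin_nonneg_of_nonneg_of_le_pi hc hle
      have := hsinΦb 0 (by omega)
      linarith
  -- four edges
  have edge0 : 0 < Φ n + Real.pi ∧ Φ n + Real.pi < Real.pi := by
    apply pm_edge (fun k => Φ k + Real.pi) n
    · exact ⟨by linarith [hΦ0neg.1], by linarith [hΦ0neg.2]⟩
    · intro k hk
      simpa [add_sub_add_right_eq_sub] using hstepΦ k (by omega)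
    · intro k hk
      rw [Real.sin_add_pi]
      linarith [hsinΦb k hk]
  have corner1 : 0 < Φ n + Real.pi / 2 ∧ Φ n + Real.pi / 2 < Real.pi := by
    refine pm_corner_step (x := Φ n + Real.pi / 2) ?_ ?_ ?_
    · linarith [edge0.1]
    · linarith [edge0.2]
    · rw [Real.sin_add_pi_div_two]
      exact hcosΦr n le_rfl (by omega)
  have edge1 : 0 < Φ (n + n) + Real.pi / 2 ∧ Φ (n + n) + Real.pi / 2 < Real.pi := by
    apply pm_edge (fun k => Φ (n + k) + Real.pi / 2) n
    · exact corner1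
    · intro k hk
      simpa [add_sub_add_right_eq_sub, add_assoc] using hstepΦ (n + k) (by omega)
    · intro k hk
      rw [Real.sin_add_pi_div_two]
      exact hcosΦr (n + k) (by omega) (by omega)
  have h2n : n + n = 2 * n := by omega
  rw [h2n] at edge1
  have corner2 : 0 < Φ (2 * n) ∧ Φ (2 * n) < Real.pi := by
    refine pm_corner_step (x := Φ (2 * n)) ?_ ?_ ?_
    · linarith [edge1.1]
    · linarith [edge1.2]
    · exact hsinΦt (2 * n) le_rfl (by omega)
  have edge2 : 0 < Φ (2 * n + n) ∧ Φ (2 * n + n) < Real.pi := by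
    apply pm_edge (fun k => Φ (2 * n + k)) n
    · exact corner2
    · intro k hk
      simpa [add_assoc] using hstepΦ (2 * n + k) (by omega)
    · intro k hk
      exact hsinΦt (2 * n + k) (by omega) (by omega)
  have h3n : 2 * n + n = 3 * n := by omega
  rw [h3n] at edge2
  have corner3 : 0 < Φ (3 * n) - Real.pi / 2 ∧ Φ (3 * n) - Real.pi / 2 < Real.pi := by
    refine pm_corner_step (x := Φ (3 * n) - Real.pi / 2) ?_ ?_ ?_
    · linarith [edge2.1]
    · linarith [edge2.2]
    · rw [Real.sin_sub_pi_div_two]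
      linarith [hcosΦl (3 * n) le_rfl (by omega)]
  have edge3 : 0 < Φ (3 * n + n) - Real.pi / 2 ∧ Φ (3 * n + n) - Real.pi / 2 < Real.pi := by
    apply pm_edge (fun k => Φ (3 * n + k) - Real.pi / 2) n
    · exact corner3
    · intro k hk
      simpa [sub_sub_sub_cancel_right, add_assoc] using hstepΦ (3 * n + k) (by omega)
    · intro k hk
      rw [Real.sin_sub_pi_div_two]
      linarith [hcosΦl (3 * n + k) (by omega) (by omega)]
  have h4n : 3 * n + n = 4 * n := by omega
  rw [h4n] at edge3
  have hS1pos : 0 < S 1 := by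
    rw [hS1]
    linarith [edge3.1, hΦ0neg.2, hπ]
  -- the contradiction
  obtain ⟨k1, hk1⟩ := hS2pi 1 h1mem
  have hk1pos : (0 : ℝ) < (k1 : ℝ) := by
    by_contra hc; push_neg at hc
    have : (k1 : ℝ) * (2 * Real.pi) ≤ 0 := mul_nonpos_of_nonpos_of_nonneg hc (by linarith)
    rw [← hk1] at this
    linarith
  have hk1one : (1 : ℝ) ≤ (k1 : ℝ) := by
    have : (0 : ℤ) < k1 := by exact_mod_cast hk1pos
    have : (1 : ℤ) ≤ k1 := this
    exact_mod_cast this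
  have hS1ge : 2 * Real.pi ≤ S 1 := by
    rw [hk1]; nlinarith
  have hπmem : Real.pi ∈ Icc (S 0) (S 1) := by
    rw [hS0]; exact ⟨hπ.le, by linarith⟩
  obtain ⟨u, huI, hSu⟩ := intermediate_value_Icc zero_le_one hScont hπmem
  obtain ⟨k', hk'⟩ := hS2pi u huI
  rw [hSu] at hk'
  have h2 : (1 : ℝ) = 2 * (k' : ℝ) := by
    have h4 : Real.pi * 1 = Real.pi * (2 * (k' : ℝ)) := by
      rw [mul_one]
      nth_rewrite 1 [hk']
      ring
    exact mul_left_cancel₀ (ne_of_gt hπ) h4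
  have h3 : (2 * k' : ℤ) = 1 := by exact_mod_cast h2.symm
  omega
end

section
/- Let H:[0,1]×[0,π]→S² be a continuous map with H(s,0)=N=(0,0,1) and H(s,π)=S=(0,0,-1) for all s∈[0,1]. Then there exists a connected subset Λ of ([0,1]×[0,π]) contained in H⁻¹(Eq) (where Eq is the equator {p∈S² : z(p)=0}) such that Λ intersects both {0}×[0,π] and {1}×[0,π]. -/
open Set Real

lemma aux_cos_pos_exists {x : ℝ} (h : 0 < Real.cos x) :
    ∃ k : ℤ, 2*π*k - π/2 < x ∧ x < 2*π*k + π/2 := by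
  set k : ℤ := round (x / (2*π)) with hk
  have h2pi : (0:ℝ) < 2*π := by positivity
  have hround : |x / (2*π) - k| ≤ 1/2 := by simpa using abs_sub_round (x / (2*π))
  have hxk : |x - 2*π*k| ≤ π := by
    have he : x - 2*π*k = (x/(2*π) - k) * (2*π) := by field_simp
    rw [he, abs_mul, abs_of_pos h2pi]
    nlinarith
  have hcos : Real.cos (x - 2*π*k) = Real.cos x := by
    have := Real.cos_add_int_mul_two_pi x (-k)
    simpa [mul_comm, sub_eq_add_neg, mul_assoc] using this
  refine ⟨k, ?_, ?_⟩ <;> by_contra hc <;> push_neg at hc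
  · -- x ≤ 2πk - π/2, so x - 2πk ≤ -π/2, |x-2πk| ∈ [π/2, π]
    have h1 : π/2 ≤ |x - 2*π*k| := by
      rw [abs_sub_comm]
      calc π/2 ≤ 2*π*k - x := by linarith
        _ ≤ |2*π*k - x| := le_abs_self _
    have : Real.cos |x - 2*π*k| ≤ 0 :=
      Real.cos_nonpos_of_pi_div_two_le_of_le h1 (by linarith)
    rw [Real.cos_abs, hcos] at this; linarith
  · have h1 : π/2 ≤ |x - 2*π*k| := by
      calc π/2 ≤ x - 2*π*k := by linarith
        _ ≤ |x - 2*π*k| := le_abs_self _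
    have : Real.cos |x - 2*π*k| ≤ 0 :=
      Real.cos_nonpos_of_pi_div_two_le_of_le h1 (by linarith)
    rw [Real.cos_abs, hcos] at this; linarith

lemma aux_cos_neg_exists {x : ℝ} (h : Real.cos x < 0) :
    ∃ k : ℤ, 2*π*k + π/2 < x ∧ x < 2*π*k + 3*π/2 := by
  have h' : 0 < Real.cos (x + π) := by rw [Real.cos_add_pi]; linarith
  obtain ⟨k, h1, h2⟩ := aux_cos_pos_exists h'
  refine ⟨k - 1, ?_, ?_⟩ <;> · push_cast; linarith

lemma aux_cos_zero (k : ℤ) : Real.cos (2*π*k + π/2) = 0 := by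
  have := Real.cos_add_int_mul_two_pi (π/2) k
  rw [Real.cos_pi_div_two] at this
  rw [← this]; ring_nf

lemma aux_sin_one (k : ℤ) : Real.sin (2*π*k + π/2) = 1 := by
  have := Real.sin_add_int_mul_two_pi (π/2) k
  rw [Real.sin_pi_div_two] at this
  rw [← this]; ring_nf

lemma aux_cos_zero' (k : ℤ) : Real.cos (2*π*k - π/2) = 0 := by
  have := Real.cos_add_int_mul_two_pi (-(π/2)) k
  rw [Real.cos_neg, Real.cos_pi_div_two] at this
  rw [← this]; ring_nf

lemma aux_sin_neg_one (k : ℤ) : Real.sin (2*π*k - π/2) = -1 := by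
  have := Real.sin_add_int_mul_two_pi (-(π/2)) k
  rw [Real.sin_neg, Real.sin_pi_div_two] at this
  rw [← this]; ring_nf

lemma aux_no_lift (a b c d : ℝ)
    (hB : ∀ y ∈ uIcc a c, 0 < Real.cos y)
    (hT : ∀ y ∈ uIcc b d, Real.cos y < 0)
    (hL : ∀ y ∈ uIcc a b, ¬(Real.cos y = 0 ∧ 0 < Real.sin y))
    (hR : ∀ y ∈ uIcc c d, ¬(Real.cos y = 0 ∧ Real.sin y < 0)) : False := by
  have hπ := Real.pi_pos
  have hstep : ∀ {p q : ℤ}, p ≤ q → 2*π*(p:ℝ) ≤ 2*π*(q:ℝ) := by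
    intro p q h
    have hpq : (p:ℝ) ≤ (q:ℝ) := by exact_mod_cast h
    exact mul_le_mul_of_nonneg_left hpq (by positivity)
  obtain ⟨k₁, ha1, ha2⟩ := aux_cos_pos_exists (hB a left_mem_uIcc)
  obtain ⟨k₁', hc1, hc2⟩ := aux_cos_pos_exists (hB c right_mem_uIcc)
  obtain ⟨k₂, hb1, hb2⟩ := aux_cos_neg_exists (hT b left_mem_uIcc)
  obtain ⟨k₂', hd1, hd2⟩ := aux_cos_neg_exists (hT d right_mem_uIcc)
  have hk1 : k₁ = k₁' := by
    by_contra hne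
    rcases lt_or_gt_of_ne hne with hlt | hgt
    · have hm := hstep (show k₁ + 1 ≤ k₁' by omega)
      push_cast at hm
      have hy : 2*π*(k₁:ℝ) + π/2 ∈ uIcc a c :=
        mem_uIcc.mpr (Or.inl ⟨by linarith, by linarith⟩)
      have := hB _ hy
      rw [aux_cos_zero k₁] at this; exact lt_irrefl 0 this
    · have hm := hstep (show k₁' + 1 ≤ k₁ by omega)
      push_cast at hm
      have hy : 2*π*(k₁':ℝ) + π/2 ∈ uIcc a c :=
        mem_uIcc.mpr (Or.inr ⟨by linarith, by linarith⟩)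
      have := hB _ hy
      rw [aux_cos_zero k₁'] at this; exact lt_irrefl 0 this
  have hk2 : k₂ = k₂' := by
    by_contra hne
    rcases lt_or_gt_of_ne hne with hlt | hgt
    · have hm := hstep (show k₂ + 1 ≤ k₂' by omega)
      push_cast at hm
      have hy : 2*π*((k₂+1 : ℤ):ℝ) - π/2 ∈ uIcc b d := by
        refine mem_uIcc.mpr (Or.inl ⟨?_, ?_⟩) <;> · push_cast; linarith
      have := hT _ hy
      rw [aux_cos_zero' (k₂+1)] at this; exact lt_irrefl 0 this
    · have hm := hstep (show k₂' + 1 ≤ k₂ by omega)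
      push_cast at hm
      have hy : 2*π*((k₂'+1 : ℤ):ℝ) - π/2 ∈ uIcc b d := by
        refine mem_uIcc.mpr (Or.inr ⟨?_, ?_⟩) <;> · push_cast; linarith
      have := hT _ hy
      rw [aux_cos_zero' (k₂'+1)] at this; exact lt_irrefl 0 this
  have hk21 : k₂ = k₁ - 1 := by
    rcases lt_trichotomy k₂ (k₁ - 1) with hlt | heq | hgt
    · exfalso
      have hm := hstep (show k₂ + 2 ≤ k₁ by omega)
      push_cast at hm
      have hy : 2*π*(((k₁-1) : ℤ):ℝ) + π/2 ∈ uIcc a b := by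
        refine mem_uIcc.mpr (Or.inr ⟨?_, ?_⟩) <;> · push_cast; linarith
      exact hL _ hy ⟨aux_cos_zero (k₁-1), by rw [aux_sin_one]; norm_num⟩
    · exact heq
    · exfalso
      have hm := hstep (show k₁ ≤ k₂ by omega)
      push_cast at hm
      have hy : 2*π*(k₁:ℝ) + π/2 ∈ uIcc a b :=
        mem_uIcc.mpr (Or.inl ⟨by linarith, by linarith⟩)
      exact hL _ hy ⟨aux_cos_zero k₁, by rw [aux_sin_one]; norm_num⟩
  have hy : 2*π*(k₁:ℝ) - π/2 ∈ uIcc c d := by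
    refine mem_uIcc.mpr (Or.inr ⟨?_, ?_⟩)
    · have h1 : (k₂':ℝ) = (k₁:ℝ) - 1 := by
        have : k₂' = k₁ - 1 := by omega
        rw [this]; push_cast; ring
      rw [h1] at hd2; linarith
    · rw [hk1]; linarith
  exact hR _ hy ⟨aux_cos_zero' k₁, by rw [aux_sin_neg_one]; norm_num⟩

lemma aux_clopen_sep {α : Type*} [TopologicalSpace α] [T2Space α]
    {Z L R : Set α} (hZ : IsCompact Z)
    (hLZ : L ⊆ Z) (hRZ : R ⊆ Z) (hLc : IsClosed L) (hRc : IsClosed R)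
    (hcomp : ∀ x ∈ L, connectedComponentIn Z x ∩ R = ∅) :
    ∃ U V : Set α, IsCompact U ∧ IsCompact V ∧ U ∪ V = Z ∧ Disjoint U V ∧
      L ⊆ U ∧ R ⊆ V := by
  have hcs : CompactSpace Z := isCompact_iff_compactSpace.mp hZ
  -- preimages in the subtype
  set L' : Set Z := Subtype.val ⁻¹' L with hL'
  set R' : Set Z := Subtype.val ⁻¹' R with hR'
  have hL'c : IsClosed L' := hLc.preimage continuous_subtype_val
  have hR'c : IsClosed R' := hRc.preimage continuous_subtype_val
  have hR'cpt : IsCompact R' := hR'c.isCompact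
  -- for each x ∈ L', a clopen set containing x disjoint from R'
  have key : ∀ x : Z, (x : α) ∈ L → ∃ C : Set Z, IsClopen C ∧ x ∈ C ∧ C ∩ R' = ∅ := by
    intro x hx
    have hcc : connectedComponent x ∩ R' = ∅ := by
      have h1 := hcomp _ hx
      rw [connectedComponentIn_eq_image (hLZ hx)] at h1
      by_contra hne
      rw [← Ne, ← nonempty_iff_ne_empty] at hne
      obtain ⟨y, hy1, hy2⟩ := hne
      have : (y:α) ∈ Subtype.val '' connectedComponent (⟨(x:α), hLZ hx⟩ : Z) ∩ R := by
        constructor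
        · exact ⟨y, by convert hy1, rfl⟩
        · exact hy2
      rw [h1] at this; exact this
    rw [connectedComponent_eq_iInter_isClopen x] at hcc
    -- compactness: finitely many clopens suffice
    have h1 := hR'cpt.inter_iInter_nonempty
      (fun s : { s : Set Z // IsClopen s ∧ x ∈ s } => (s : Set Z))
      (fun s => s.2.1.1)
    rw [← not_disjoint_iff_nonempty_inter, imp_not_comm, not_forall] at h1
    obtain ⟨si, h2⟩ := h1 (by
      rw [disjoint_iff_inter_eq_empty, inter_comm]
      exact hcc)
    refine ⟨⋂ s ∈ si, (s : Set Z), isClopen_biInter_finset (fun s _ => s.2.1), 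
      mem_iInter₂.2 fun s _ => s.2.2, ?_⟩
    rw [← not_nonempty_iff_eq_empty]
    intro ⟨y, hy1, hy2⟩
    exact h2 ⟨y, hy2, hy1⟩
  -- cover L' by such clopens
  choose C hC1 hC2 hC3 using key
  have hL'cpt : IsCompact L' := hL'c.isCompact
  obtain ⟨t, ht⟩ := hL'cpt.elim_finite_subcover
    (fun x : {x : Z // (x:α) ∈ L} => C x x.2) (fun x => (hC1 x.1 x.2).2) (by
      intro y hy
      exact mem_iUnion.2 ⟨⟨y, hy⟩, hC2 y hy⟩)
  set U' : Set Z := ⋃ x ∈ t, C x.1 x.2 with hU'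
  have hU'clopen : IsClopen U' := isClopen_biUnion_finset (fun x _ => hC1 x.1 x.2)
  have hU'L : L' ⊆ U' := ht
  have hU'R : U' ∩ R' = ∅ := by
    rw [← not_nonempty_iff_eq_empty]
    intro ⟨y, hy1, hy2⟩
    obtain ⟨x, -, hx⟩ := mem_iUnion₂.1 hy1
    have := hC3 x.1 x.2
    rw [← not_nonempty_iff_eq_empty] at this
    exact this ⟨y, hx, hy2⟩
  refine ⟨Subtype.val '' U', Subtype.val '' U'ᶜ, ?_, ?_, ?_, ?_, ?_, ?_⟩
  · exact (hU'clopen.1.isCompact).image continuous_subtype_val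
  · exact (hU'clopen.compl.1.isCompact).image continuous_subtype_val
  · rw [← image_union, union_compl_self, image_univ, Subtype.range_coe]
  · rw [disjoint_iff_inter_eq_empty, ← image_inter Subtype.val_injective,
      inter_compl_self, image_empty]
  · intro x hx
    exact ⟨⟨x, hLZ hx⟩, hU'L hx, rfl⟩
  · intro x hx
    refine ⟨⟨x, hRZ hx⟩, ?_, rfl⟩
    intro hmem
    have := hU'R
    rw [← not_nonempty_iff_eq_empty] at this
    exact this ⟨⟨x, hRZ hx⟩, hmem, hx⟩

lemma aux_lip_min (a b s : ℝ) : |min a s - min b s| ≤ |a - b| := by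
  rcases le_total a s with h1 | h1 <;> rcases le_total b s with h2 | h2
  · rw [min_eq_left h1, min_eq_left h2]
  · rw [min_eq_left h1, min_eq_right h2, abs_of_nonpos (by linarith),
      abs_of_nonpos (by linarith)]
    linarith
  · rw [min_eq_right h1, min_eq_left h2, abs_of_nonneg (by linarith),
      abs_of_nonneg (by linarith)]
    linarith
  · rw [min_eq_right h1, min_eq_right h2]
    simp [abs_nonneg]

lemma aux_exp_telescope (m : ℕ) (v : ℕ → ℂ) (hv : ∀ k, v k ≠ 0)
    (hv1 : ∀ k, ‖v k‖ = 1) :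
    Complex.exp ((∑ i ∈ Finset.range m, Complex.arg (v (i+1) / v i)) * Complex.I) * v 0
      = v m := by
  induction m with
  | zero => simp
  | succ k ih =>
    have hr : ‖v (k+1) / v k‖ = 1 := by
      rw [norm_div, hv1, hv1, div_one]
    have he : Complex.exp (Complex.arg (v (k+1) / v k) * Complex.I) = v (k+1) / v k := by
      have h := Complex.norm_mul_exp_arg_mul_I (v (k+1) / v k)
      rw [hr] at h
      simpa using h
    have hstep : Complex.exp ((∑ i ∈ Finset.range (k+1), Complex.arg (v (i+1) / v i))
          * Complex.I) * v 0
        = (Complex.exp ((∑ i ∈ Finset.range k, Complex.arg (v (i+1) / v i))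
          * Complex.I) * v 0) * (v (k+1) / v k) := by
      rw [Finset.sum_range_succ]
      push_cast
      rw [add_mul, Complex.exp_add, he]; ring
    rw [hstep, ih, mul_comm, div_mul_cancel₀ _ (hv k)]

lemma aux_exists_lift {u : ℝ × ℝ → ℂ} (hu : Continuous u)
    (habs : ∀ x, ‖u x‖ = 1) :
    ∃ θ : ℝ × ℝ → ℝ,
      (∀ x ∈ Icc (0:ℝ) 1 ×ˢ Icc (0:ℝ) π, ContinuousAt θ x) ∧
      (∀ x ∈ Icc (0:ℝ) 1 ×ˢ Icc (0:ℝ) π, Complex.exp (θ x * Complex.I) = u x) := by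
  have hπ := Real.pi_pos
  set Q : Set (ℝ × ℝ) := Icc (0:ℝ) 1 ×ˢ Icc (0:ℝ) π with hQdef
  have hQ : IsCompact Q := isCompact_Icc.prod isCompact_Icc
  have hne : ∀ x, u x ≠ 0 := by
    intro x h
    have := habs x
    rw [h] at this
    simp at this
  obtain ⟨δ, hδ0, hδ⟩ := Metric.uniformContinuousOn_iff.mp
    (hQ.uniformContinuousOn_of_continuous hu.continuousOn) 1 one_pos
  obtain ⟨n, hn⟩ := exists_nat_gt (4 / δ)
  have hn0 : 0 < (n:ℝ) := lt_trans (by positivity) hn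
  have h4 : 4 < (n:ℝ) * δ := by
    have := (div_lt_iff₀ hδ0).mp hn
    linarith
  have hmesh1 : 1 / (n:ℝ) < δ := by
    rw [div_lt_iff₀ hn0]; nlinarith
  have hmeshπ : π / (n:ℝ) < δ := by
    rw [div_lt_iff₀ hn0]; nlinarith [Real.pi_lt_d2]
  -- the two families of ratios
  set g1 : ℕ → ℝ × ℝ → ℂ := fun i x =>
    u (min (((i:ℝ)+1)/n) x.1, 0) / u (min ((i:ℝ)/n) x.1, 0) with hg1
  set g2 : ℕ → ℝ × ℝ → ℂ := fun j x =>
    u (x.1, min (((j:ℝ)+1)*π/n) x.2) / u (x.1, min ((j:ℝ)*π/n) x.2) with hg2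
  -- evaluation points stay in Q
  have hmemQ1 : ∀ (a : ℝ) (x : ℝ × ℝ), 0 ≤ a → x ∈ Q → (min a x.1, 0) ∈ Q := by
    rintro a x ha ⟨hx1, hx2⟩
    exact ⟨⟨le_min ha hx1.1, le_trans (min_le_right _ _) hx1.2⟩,
      ⟨le_refl 0, le_of_lt hπ⟩⟩
  have hmemQ2 : ∀ (a : ℝ) (x : ℝ × ℝ), 0 ≤ a → x ∈ Q → (x.1, min a x.2) ∈ Q := by
    rintro a x ha ⟨hx1, hx2⟩
    exact ⟨hx1, ⟨le_min ha hx2.1, le_trans (min_le_right _ _) hx2.2⟩⟩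
  -- ratio bounds
  have hball : ∀ (p q : ℝ × ℝ), p ∈ Q → q ∈ Q → dist p q < δ →
      ‖u p / u q - 1‖ < 1 := by
    intro p q hp hq hd
    have h1 : dist (u p) (u q) < 1 := hδ p hp q hq hd
    rw [div_sub_one (hne q), norm_div, habs q, div_one, ← dist_eq_norm]
    exact h1
  have hslit : ∀ (p q : ℝ × ℝ), p ∈ Q → q ∈ Q → dist p q < δ →
      u p / u q ∈ Complex.slitPlane := by
    intro p q hp hq hd
    have h := Complex.mem_slitPlane_of_norm_lt_one (z := u p / u q - 1)
      (by exact hball p q hp hq hd)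
    simpa using h
  have hd1 : ∀ (i : ℕ) (x : ℝ × ℝ), x ∈ Q →
      dist ((min (((i:ℝ)+1)/n) x.1, (0:ℝ)) : ℝ × ℝ) (min ((i:ℝ)/n) x.1, 0) < δ := by
    intro i x hx
    rw [Prod.dist_eq]
    simp only [dist_self]
    rw [max_eq_left dist_nonneg, Real.dist_eq]
    calc |min (((i:ℝ)+1)/n) x.1 - min ((i:ℝ)/n) x.1| ≤ |((i:ℝ)+1)/n - (i:ℝ)/n| :=
          aux_lip_min _ _ _
      _ = 1/(n:ℝ) := by rw [div_sub_div_same]; norm_num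
      _ < δ := hmesh1
  have hd2 : ∀ (j : ℕ) (x : ℝ × ℝ), x ∈ Q →
      dist ((x.1, min (((j:ℝ)+1)*π/n) x.2) : ℝ × ℝ) (x.1, min ((j:ℝ)*π/n) x.2) < δ := by
    intro j x hx
    rw [Prod.dist_eq]
    simp only [dist_self]
    rw [max_eq_right dist_nonneg, Real.dist_eq]
    calc |min (((j:ℝ)+1)*π/n) x.2 - min ((j:ℝ)*π/n) x.2|
          ≤ |((j:ℝ)+1)*π/n - (j:ℝ)*π/n| := aux_lip_min _ _ _
      _ = π/(n:ℝ) := by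
          rw [← sub_div, ← sub_mul]
          norm_num [abs_of_nonneg (le_of_lt hπ), le_of_lt hπ,
            abs_of_nonneg (div_nonneg (le_of_lt hπ) (le_of_lt hn0))]
      _ < δ := hmeshπ
  have hg1slit : ∀ (i : ℕ) (x : ℝ × ℝ), x ∈ Q → g1 i x ∈ Complex.slitPlane := by
    intro i x hx
    exact hslit _ _ (hmemQ1 _ _ (by positivity) hx) (hmemQ1 _ _ (by positivity) hx)
      (hd1 i x hx)
  have hg2slit : ∀ (j : ℕ) (x : ℝ × ℝ), x ∈ Q → g2 j x ∈ Complex.slitPlane := by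
    intro j x hx
    exact hslit _ _ (hmemQ2 _ _ (by positivity) hx) (hmemQ2 _ _ (by positivity) hx)
      (hd2 j x hx)
  -- the lift
  refine ⟨fun x => Complex.arg (u (0,0))
      + (∑ i ∈ Finset.range n, Complex.arg (g1 i x))
      + (∑ j ∈ Finset.range n, Complex.arg (g2 j x)), ?_, ?_⟩
  · -- continuity
    intro x hx
    have hc1 : ∀ i : ℕ, Continuous (g1 i) := by
      intro i
      apply Continuous.div
      · exact hu.comp ((continuous_const.min continuous_fst).prodMk continuous_const)
      · exact hu.comp ((continuous_const.min continuous_fst).prodMk continuous_const)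
      · intro y; exact hne _
    have hc2 : ∀ j : ℕ, Continuous (g2 j) := by
      intro j
      apply Continuous.div
      · exact hu.comp (continuous_fst.prodMk (continuous_const.min continuous_snd))
      · exact hu.comp (continuous_fst.prodMk (continuous_const.min continuous_snd))
      · intro y; exact hne _
    apply ContinuousAt.add
    apply ContinuousAt.add
    · exact continuousAt_const
    · exact tendsto_finset_sum _ fun i _ =>
        (Complex.continuousAt_arg (hg1slit i x hx)).comp (hc1 i).continuousAt
    · exact tendsto_finset_sum _ fun j _ =>
        (Complex.continuousAt_arg (hg2slit j x hx)).comp (hc2 j).continuousAt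
  · -- the exponential identity
    rintro ⟨s, t⟩ ⟨hs, ht⟩
    simp only
    rw [Complex.ofReal_add, Complex.ofReal_add, add_mul, add_mul,
      Complex.exp_add, Complex.exp_add]
    have he0 : Complex.exp ((Complex.arg (u (0,0)) : ℂ) * Complex.I) = u (0,0) := by
      have h := Complex.norm_mul_exp_arg_mul_I (u (0,0))
      rw [habs] at h
      simpa using h
    -- first telescope
    set v1 : ℕ → ℂ := fun k => u (min ((k:ℝ)/n) s, 0) with hv1def
    have ht1 : Complex.exp ((∑ i ∈ Finset.range n, Complex.arg (g1 i (s, t)))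
        * Complex.I) * u (0, 0) = u (s, 0) := by
      have hsum : (∑ i ∈ Finset.range n, Complex.arg (g1 i (s, t)))
          = ∑ i ∈ Finset.range n, Complex.arg (v1 (i+1) / v1 i) := by
        apply Finset.sum_congr rfl
        intro i _
        have : (((i+1 : ℕ)):ℝ) = (i:ℝ) + 1 := by push_cast; ring
        simp [hg1, hv1def, this]
      have h0 : v1 0 = u (0, 0) := by
        have : min (((0:ℕ):ℝ)/n) s = 0 := by
          rw [min_eq_left]
          · norm_num
          · norm_num; exact hs.1
        simp only [hv1def]
        rw [this]
      have hn' : v1 n = u (s, 0) := by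
        have : min (((n:ℕ):ℝ)/n) s = s := by
          rw [min_eq_right]
          rw [div_self (ne_of_gt hn0)]
          exact hs.2
        simp only [hv1def]
        rw [this]
      rw [hsum, ← h0, aux_exp_telescope n v1 (fun k => hne _) (fun k => habs _), hn']
    -- second telescope
    set v2 : ℕ → ℂ := fun k => u (s, min ((k:ℝ)*π/n) t) with hv2def
    have ht2 : Complex.exp ((∑ j ∈ Finset.range n, Complex.arg (g2 j (s, t)))
        * Complex.I) * u (s, 0) = u (s, t) := by
      have hsum : (∑ j ∈ Finset.range n, Complex.arg (g2 j (s, t)))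
          = ∑ j ∈ Finset.range n, Complex.arg (v2 (j+1) / v2 j) := by
        apply Finset.sum_congr rfl
        intro j _
        have : (((j+1 : ℕ)):ℝ) = (j:ℝ) + 1 := by push_cast; ring
        simp [hg2, hv2def, this]
      have h0 : v2 0 = u (s, 0) := by
        have : min (((0:ℕ):ℝ)*π/n) t = 0 := by
          rw [min_eq_left]
          · norm_num
          · norm_num; exact ht.1
        simp only [hv2def]
        rw [this]
      have hn' : v2 n = u (s, t) := by
        have : min (((n:ℕ):ℝ)*π/n) t = t := by
          rw [min_eq_right]
          rw [mul_comm, mul_div_assoc, div_self (ne_of_gt hn0), mul_one]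
          exact ht.2
        simp only [hv2def]
        rw [this]
      rw [hsum, ← h0, aux_exp_telescope n v2 (fun k => hne _) (fun k => habs _), hn']
    calc Complex.exp ((Complex.arg (u (0,0)) : ℂ) * Complex.I)
          * Complex.exp ((∑ i ∈ Finset.range n, Complex.arg (g1 i (s, t))) * Complex.I)
          * Complex.exp ((∑ j ∈ Finset.range n, Complex.arg (g2 j (s, t))) * Complex.I)
        = Complex.exp ((∑ j ∈ Finset.range n, Complex.arg (g2 j (s, t))) * Complex.I)
          * (Complex.exp ((∑ i ∈ Finset.range n, Complex.arg (g1 i (s, t))) * Complex.I)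
          * u (0,0)) := by rw [he0]; ring
      _ = u (s, t) := by rw [ht1, ht2]

/-- The unit 2-sphere in `ℝ³` (as `ℝ × ℝ × ℝ`). -/
def unitSphere : Set (ℝ × ℝ × ℝ) := {p | p.1 ^ 2 + p.2.1 ^ 2 + p.2.2 ^ 2 = 1}

theorem stmt_4 (H : ℝ × ℝ → ℝ × ℝ × ℝ)
    (hcont : ContinuousOn H (Icc 0 1 ×ˢ Icc 0 π))
    (hsphere : ∀ x ∈ Icc (0:ℝ) 1 ×ˢ Icc (0:ℝ) π, H x ∈ unitSphere)
    (hN : ∀ s ∈ Icc (0:ℝ) 1, H (s, 0) = (0, 0, 1))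
    (hS : ∀ s ∈ Icc (0:ℝ) 1, H (s, π) = (0, 0, -1)) :
    ∃ Λ : Set (ℝ × ℝ), Λ ⊆ Icc 0 1 ×ˢ Icc 0 π ∧
      IsConnected Λ ∧
      (∀ x ∈ Λ, (H x).2.2 = 0) ∧
      (Λ ∩ ({0} ×ˢ Icc 0 π)).Nonempty ∧
      (Λ ∩ ({1} ×ˢ Icc 0 π)).Nonempty := by
  have hπ := Real.pi_pos
  by_contra hcon
  push_neg at hcon
  set Q : Set (ℝ × ℝ) := Icc 0 1 ×ˢ Icc 0 π with hQdef
  set f : ℝ × ℝ → ℝ := fun x => (H x).2.2 with hfdef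
  have hQcpt : IsCompact Q := isCompact_Icc.prod isCompact_Icc
  have hQcl : IsClosed Q := (isClosed_Icc).prod isClosed_Icc
  have hf : ContinuousOn f Q := (continuous_snd.comp continuous_snd).comp_continuousOn hcont
  have hfN : ∀ s ∈ Icc (0:ℝ) 1, f (s, 0) = 1 := by
    intro s hs; rw [hfdef]; simp only; rw [hN s hs]
  have hfS : ∀ s ∈ Icc (0:ℝ) 1, f (s, π) = -1 := by
    intro s hs; rw [hfdef]; simp only; rw [hS s hs]
  set Z : Set (ℝ × ℝ) := Q ∩ f ⁻¹' {0} with hZdef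
  have hZcl : IsClosed Z := hf.preimage_isClosed_of_isClosed hQcl isClosed_singleton
  have hZcpt : IsCompact Z := hQcpt.of_isClosed_subset hZcl inter_subset_left
  set left : Set (ℝ × ℝ) := {(0:ℝ)} ×ˢ Icc (0:ℝ) π with hleftdef
  set right : Set (ℝ × ℝ) := {(1:ℝ)} ×ˢ Icc (0:ℝ) π with hrightdef
  set L : Set (ℝ × ℝ) := Z ∩ left with hLdef
  set R : Set (ℝ × ℝ) := Z ∩ right with hRdef
  -- edge maps are continuous
  have hedgecont : ∀ s ∈ Icc (0:ℝ) 1, ContinuousOn (fun t => f (s, t)) (Icc 0 π) := by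
    intro s hs
    apply hf.comp ((Continuous.prodMk_right s).continuousOn)
    intro t ht
    exact ⟨hs, ht⟩
  -- zeros on each vertical edge
  have hedge : ∀ s ∈ Icc (0:ℝ) 1, ∃ t ∈ Icc (0:ℝ) π, f (s, t) = 0 := by
    intro s hs
    have hIcc : uIcc (0:ℝ) π = Icc 0 π := uIcc_of_le (le_of_lt hπ)
    have h1 := intermediate_value_uIcc (f := fun t => f (s, t)) (a := (0:ℝ)) (b := π)
      (by rw [hIcc]; exact hedgecont s hs)
    have h0 : (0:ℝ) ∈ uIcc (f (s, 0)) (f (s, π)) := by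
      rw [hfN s hs, hfS s hs]
      exact mem_uIcc.mpr (Or.inr ⟨by norm_num, by norm_num⟩)
    obtain ⟨t, ht, htv⟩ := h1 h0
    exact ⟨t, by rwa [hIcc] at ht, htv⟩
  have h01 : (0:ℝ) ∈ Icc (0:ℝ) 1 := ⟨le_refl 0, by norm_num⟩
  have h11 : (1:ℝ) ∈ Icc (0:ℝ) 1 := ⟨by norm_num, le_refl 1⟩
  obtain ⟨tL, htL, htLv⟩ := hedge 0 h01
  obtain ⟨tR, htR, htRv⟩ := hedge 1 h11
  have hLne : L.Nonempty := ⟨(0, tL), ⟨⟨⟨h01, htL⟩, htLv⟩, ⟨rfl, htL⟩⟩⟩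
  have hRne : R.Nonempty := ⟨(1, tR), ⟨⟨⟨h11, htR⟩, htRv⟩, ⟨rfl, htR⟩⟩⟩
  -- no connected subset of Z meets both edges
  have hcomp : ∀ x ∈ L, connectedComponentIn Z x ∩ R = ∅ := by
    intro x hx
    have hconn : IsConnected (connectedComponentIn Z x) :=
      isConnected_connectedComponentIn_iff.mpr hx.1
    have hsub : connectedComponentIn Z x ⊆ Q :=
      (connectedComponentIn_subset Z x).trans inter_subset_left
    have hzero : ∀ y ∈ connectedComponentIn Z x, (H y).2.2 = 0 := by
      intro y hy
      exact (connectedComponentIn_subset Z x hy).2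
    have hmeet : (connectedComponentIn Z x ∩ left).Nonempty :=
      ⟨x, mem_connectedComponentIn hx.1, hx.2⟩
    have hres := hcon _ hsub hconn hzero hmeet
    rw [← not_nonempty_iff_eq_empty]
    rintro ⟨y, hy1, hy2⟩
    have hmem : y ∈ connectedComponentIn Z x ∩ right := ⟨hy1, hy2.2⟩
    rw [hres] at hmem
    exact hmem
  have hLcl : IsClosed L := hZcl.inter (isClosed_singleton.prod isClosed_Icc)
  have hRcl : IsClosed R := hZcl.inter (isClosed_singleton.prod isClosed_Icc)
  obtain ⟨U, V, hUcpt, hVcpt, hUV, hdisj, hLU, hRV⟩ :=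
    aux_clopen_sep hZcpt inter_subset_left inter_subset_left hLcl hRcl hcomp
  have hUne : U.Nonempty := hLne.mono hLU
  have hVne : V.Nonempty := hRne.mono hRV
  -- the auxiliary separation function
  set ψ : ℝ × ℝ → ℝ := fun x => Metric.infDist x U - Metric.infDist x V with hψdef
  have hψcont : Continuous ψ :=
    (Metric.continuous_infDist_pt U).sub (Metric.continuous_infDist_pt V)
  have hψU : ∀ y ∈ U, ψ y < 0 := by
    intro y hy
    have h1 : Metric.infDist y U = 0 := Metric.infDist_zero_of_mem hy
    have h2 : 0 < Metric.infDist y V := by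
      rw [← hVcpt.isClosed.notMem_iff_infDist_pos hVne]
      exact fun hyV => (disjoint_left.mp hdisj) hy hyV
    simp only [hψdef]; linarith
  have hψV : ∀ y ∈ V, 0 < ψ y := by
    intro y hy
    have h1 : Metric.infDist y V = 0 := Metric.infDist_zero_of_mem hy
    have h2 : 0 < Metric.infDist y U := by
      rw [← hUcpt.isClosed.notMem_iff_infDist_pos hUne]
      exact fun hyU => (disjoint_left.mp hdisj) hyU hy
    simp only [hψdef]; linarith
  -- the clamping retraction onto Q
  set proj : ℝ × ℝ → ℝ × ℝ := fun x => (max 0 (min 1 x.1), max 0 (min π x.2)) with hprojdef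
  have hprojcont : Continuous proj :=
    (continuous_const.max (continuous_const.min continuous_fst)).prodMk
      (continuous_const.max (continuous_const.min continuous_snd))
  have hprojmem : ∀ x, proj x ∈ Q := by
    intro x
    refine ⟨⟨le_max_left _ _, max_le (by norm_num) (min_le_left _ _)⟩,
      ⟨le_max_left _ _, max_le (le_of_lt hπ) (min_le_left _ _)⟩⟩
  have hprojid : ∀ x ∈ Q, proj x = x := by
    rintro ⟨s, t⟩ ⟨hs, ht⟩
    simp only [hprojdef, Prod.mk.injEq]
    constructor
    · rw [min_eq_right hs.2, max_eq_right hs.1]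
    · rw [min_eq_right ht.2, max_eq_right ht.1]
  -- the nonvanishing map to ℂ
  set F : ℝ × ℝ → ℂ := fun x => (f (proj x) : ℂ) + (ψ (proj x) : ℂ) * Complex.I with hFdef
  have hFre : ∀ x, (F x).re = f (proj x) := by intro x; simp [hFdef]
  have hFim : ∀ x, (F x).im = ψ (proj x) := by intro x; simp [hFdef]
  have hfpcont : Continuous (fun x => f (proj x)) := hf.comp_continuous hprojcont hprojmem
  have hFcont : Continuous F := by
    apply Continuous.add
    · exact Complex.continuous_ofReal.comp hfpcont
    · exact (Complex.continuous_ofReal.comp (hψcont.comp hprojcont)).mul continuous_const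
  have hFne : ∀ x, F x ≠ 0 := by
    intro x hF0
    have hre : f (proj x) = 0 := by rw [← hFre x, hF0]; simp
    have him : ψ (proj x) = 0 := by rw [← hFim x, hF0]; simp
    have hZmem : proj x ∈ Z := ⟨hprojmem x, hre⟩
    rw [← hUV] at hZmem
    rcases hZmem with hU | hV
    · exact absurd him (ne_of_lt (hψU _ hU))
    · exact absurd him (ne_of_gt (hψV _ hV))
  set u : ℝ × ℝ → ℂ := fun x => F x / (‖F x‖ : ℂ) with hudef
  have habsF : ∀ x, 0 < ‖F x‖ := fun x => by
    simpa [norm_pos_iff] using hFne x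
  have habsu : ∀ x, ‖u x‖ = 1 := by
    intro x
    simp only [hudef, norm_div, Complex.norm_real, norm_norm]
    exact div_self (ne_of_gt (habsF x))
  have hucont : Continuous u := by
    apply hFcont.div (Complex.continuous_ofReal.comp (continuous_norm.comp hFcont))
    intro x
    simpa [Complex.ofReal_eq_zero] using ne_of_gt (habsF x)
  have hure : ∀ x, (u x).re = f (proj x) / ‖F x‖ := by
    intro x; rw [hudef]; simp only [Complex.div_ofReal_re, hFre]
  have huim : ∀ x, (u x).im = ψ (proj x) / ‖F x‖ := by
    intro x; rw [hudef]; simp only [Complex.div_ofReal_im, hFim]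
  -- lift
  obtain ⟨θ, hθcont, hθexp⟩ := aux_exists_lift hucont habsu
  have hcos : ∀ x ∈ Q, Real.cos (θ x) = f (proj x) / ‖F x‖ := by
    intro x hx
    rw [← hure x, ← hθexp x hx, Complex.exp_ofReal_mul_I_re]
  have hsin : ∀ x ∈ Q, Real.sin (θ x) = ψ (proj x) / ‖F x‖ := by
    intro x hx
    rw [← huim x, ← hθexp x hx, Complex.exp_ofReal_mul_I_im]
  -- horizontal and vertical edge parametrizations
  have hmemB : ∀ s ∈ Icc (0:ℝ) 1, ((s, (0:ℝ)) : ℝ × ℝ) ∈ Q :=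
    fun s hs => ⟨hs, ⟨le_refl 0, le_of_lt hπ⟩⟩
  have hmemT : ∀ s ∈ Icc (0:ℝ) 1, ((s, π) : ℝ × ℝ) ∈ Q :=
    fun s hs => ⟨hs, ⟨le_of_lt hπ, le_refl π⟩⟩
  have hmemL : ∀ t ∈ Icc (0:ℝ) π, (((0:ℝ), t) : ℝ × ℝ) ∈ Q := fun t ht => ⟨h01, ht⟩
  have hmemR : ∀ t ∈ Icc (0:ℝ) π, (((1:ℝ), t) : ℝ × ℝ) ∈ Q := fun t ht => ⟨h11, ht⟩
  have hI01 : uIcc (0:ℝ) 1 = Icc 0 1 := uIcc_of_le (by norm_num)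
  have hI0π : uIcc (0:ℝ) π = Icc 0 π := uIcc_of_le (le_of_lt hπ)
  have hcB : ContinuousOn (fun s => θ (s, 0)) (uIcc (0:ℝ) 1) := by
    rw [hI01]
    intro s hs
    have hg : Continuous (fun s' : ℝ => ((s', (0:ℝ)) : ℝ × ℝ)) :=
      continuous_id.prodMk continuous_const
    have hca : ContinuousAt (fun s' : ℝ => θ (s', (0:ℝ))) s :=
      ContinuousAt.comp (g := θ) (f := fun s' : ℝ => ((s', (0:ℝ)) : ℝ × ℝ)) (x := s)
        (hθcont _ (hmemB s hs)) hg.continuousAt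
    exact hca.continuousWithinAt
  have hcT : ContinuousOn (fun s => θ (s, π)) (uIcc (0:ℝ) 1) := by
    rw [hI01]
    intro s hs
    have hg : Continuous (fun s' : ℝ => ((s', π) : ℝ × ℝ)) :=
      continuous_id.prodMk continuous_const
    have hca : ContinuousAt (fun s' : ℝ => θ (s', π)) s :=
      ContinuousAt.comp (g := θ) (f := fun s' : ℝ => ((s', π) : ℝ × ℝ)) (x := s)
        (hθcont _ (hmemT s hs)) hg.continuousAt
    exact hca.continuousWithinAt
  have hcL : ContinuousOn (fun t => θ (0, t)) (uIcc (0:ℝ) π) := by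
    rw [hI0π]
    intro t ht
    have hg : Continuous (fun t' : ℝ => (((0:ℝ), t') : ℝ × ℝ)) :=
      continuous_const.prodMk continuous_id
    have hca : ContinuousAt (fun t' : ℝ => θ ((0:ℝ), t')) t :=
      ContinuousAt.comp (g := θ) (f := fun t' : ℝ => (((0:ℝ), t') : ℝ × ℝ)) (x := t)
        (hθcont _ (hmemL t ht)) hg.continuousAt
    exact hca.continuousWithinAt
  have hcR : ContinuousOn (fun t => θ (1, t)) (uIcc (0:ℝ) π) := by
    rw [hI0π]
    intro t ht
    have hg : Continuous (fun t' : ℝ => (((1:ℝ), t') : ℝ × ℝ)) :=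
      continuous_const.prodMk continuous_id
    have hca : ContinuousAt (fun t' : ℝ => θ ((1:ℝ), t')) t :=
      ContinuousAt.comp (g := θ) (f := fun t' : ℝ => (((1:ℝ), t') : ℝ × ℝ)) (x := t)
        (hθcont _ (hmemR t ht)) hg.continuousAt
    exact hca.continuousWithinAt
  -- apply the winding argument
  apply aux_no_lift (θ (0, 0)) (θ (0, π)) (θ (1, 0)) (θ (1, π))
  · -- bottom edge: cos > 0
    intro y hy
    obtain ⟨s, hs, hsy⟩ := intermediate_value_uIcc hcB hy
    rw [hI01] at hs
    rw [← hsy, hcos _ (hmemB s hs), hprojid _ (hmemB s hs), hfN s hs]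
    exact div_pos one_pos (habsF _)
  · -- top edge: cos < 0
    intro y hy
    obtain ⟨s, hs, hsy⟩ := intermediate_value_uIcc hcT hy
    rw [hI01] at hs
    rw [← hsy, hcos _ (hmemT s hs), hprojid _ (hmemT s hs), hfS s hs]
    exact div_neg_of_neg_of_pos (by norm_num) (habsF _)
  · -- left edge
    intro y hy ⟨hy0, hypos⟩
    obtain ⟨t, ht, hty⟩ := intermediate_value_uIcc hcL hy
    rw [hI0π] at ht
    have hQm := hmemL t ht
    rw [← hty, hcos _ hQm, hprojid _ hQm] at hy0
    have hfz : f (0, t) = 0 := by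
      rcases div_eq_zero_iff.mp hy0 with h | h
      · exact h
      · exact absurd h (ne_of_gt (habsF _))
    have hLm : ((0:ℝ), t) ∈ L := ⟨⟨hQm, hfz⟩, ⟨rfl, ht⟩⟩
    have hψneg : ψ (0, t) < 0 := hψU _ (hLU hLm)
    rw [← hty, hsin _ hQm, hprojid _ hQm] at hypos
    have : ψ (0, t) / ‖F (0, t)‖ < 0 :=
      div_neg_of_neg_of_pos hψneg (habsF _)
    linarith
  · -- right edge
    intro y hy ⟨hy0, hyneg⟩
    obtain ⟨t, ht, hty⟩ := intermediate_value_uIcc hcR hy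
    rw [hI0π] at ht
    have hQm := hmemR t ht
    rw [← hty, hcos _ hQm, hprojid _ hQm] at hy0
    have hfz : f (1, t) = 0 := by
      rcases div_eq_zero_iff.mp hy0 with h | h
      · exact h
      · exact absurd h (ne_of_gt (habsF _))
    have hRm : ((1:ℝ), t) ∈ R := ⟨⟨hQm, hfz⟩, ⟨rfl, ht⟩⟩
    have hψpos : 0 < ψ (1, t) := hψV _ (hRV hRm)
    rw [← hty, hsin _ hQm, hprojid _ hQm] at hyneg
    have : 0 < ψ (1, t) / ‖F (1, t)‖ :=
      div_pos hψpos (habsF _)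
    linarith
end

section
/- In the spacetime (ℝ×S², -dt²+π*(Ω·g₀)) with Ω as in the causal example (Ω≥1, Ω=1 on infinitely many meridians, Ω>1 on the intermediate equatorial points), the point (π,S) lies in J⁺((0,N)) but not in I⁺((0,N)); i.e., (0,N) and (π,S) are horismotically related. -/
open Set Real MeasureTheory

noncomputable section

abbrev E3 : Type := EuclideanSpace ℝ (Fin 3)

def meridian (φ t : ℝ) : E3 :=
  (WithLp.equiv 2 (Fin 3 → ℝ)).symm ![Real.sin t * Real.cos φ, Real.sin t * Real.sin φ, Real.cos t]

def NP : E3 := (WithLp.equiv 2 (Fin 3 → ℝ)).symm ![0, 0, 1]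

def SP : E3 := (WithLp.equiv 2 (Fin 3 → ℝ)).symm ![0, 0, -1]

def equatorPt (φ : ℝ) : E3 := meridian φ (π / 2)

/-- Spatial projection (parametrized by time over `[0,π]`) of a future-directed
causal-continuous curve in `(ℝ × S², -dt² + Ω g₀)`. -/
def IsCausalSpatial (Ω : E3 → ℝ) (σ : ℝ → E3) : Prop :=
  (∀ t ∈ Icc (0:ℝ) π, ‖σ t‖ = 1) ∧
  (∃ K : NNReal, LipschitzOnWith K σ (Icc 0 π)) ∧
  ∀ᵐ t ∂(volume.restrict (Icc (0:ℝ) π)),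
    DifferentiableAt ℝ σ t → Ω (σ t) * ‖deriv σ t‖ ^ 2 ≤ 1

section Lemmas
open InnerProductGeometry
variable {V : Type*} [NormedAddCommGroup V] [InnerProductSpace ℝ V]

lemma my_arccos_le_arccos {x y : ℝ} (h : x ≤ y) : Real.arccos y ≤ Real.arccos x :=
  sub_le_sub_left (Real.monotone_arcsin h) _

lemma angle_triangle_unit {x y z : V} (hx : ‖x‖ = 1) (hy : ‖y‖ = 1) (hz : ‖z‖ = 1) :
    angle x z ≤ angle x y + angle y z := by
  rcases le_or_gt π (angle x y + angle y z) with h | h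
  · exact (angle_le_pi x z).trans h
  set a := @inner ℝ _ _ x y with ha
  set b := @inner ℝ _ _ y z with hb
  set c := @inner ℝ _ _ x z with hc
  have ha1 : |a| ≤ 1 := by
    simpa [hx, hy] using abs_real_inner_le_norm x y
  have hb1 : |b| ≤ 1 := by
    simpa [hy, hz] using abs_real_inner_le_norm y z
  have hc1 : |c| ≤ 1 := by
    simpa [hx, hz] using abs_real_inner_le_norm x z
  have key : a * b - Real.sqrt (1 - a^2) * Real.sqrt (1 - b^2) ≤ c := by
    have hiuw : @inner ℝ _ _ (x - a • y) (z - b • y) = c - a * b := by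
      simp [inner_sub_sub_self, inner_sub_left, inner_sub_right, real_inner_smul_left,
        real_inner_smul_right, real_inner_self_eq_norm_sq, hy, real_inner_comm x y]
      rw [← ha, ← hb, ← hc]; ring
    have hu2 : ‖x - a • y‖^2 = 1 - a^2 := by
      rw [norm_sub_sq_real, real_inner_smul_right, norm_smul, hx, hy]
      simp [Real.norm_eq_abs, sq_abs]
      ring
    have hu : ‖x - a • y‖ = Real.sqrt (1 - a^2) := by
      rw [← hu2, Real.sqrt_sq (norm_nonneg _)]
    have hw2 : ‖z - b • y‖^2 = 1 - b^2 := by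
      rw [norm_sub_sq_real, real_inner_smul_right, norm_smul, hz, hy]
      rw [real_inner_comm]
      rw [← hb]
      simp [Real.norm_eq_abs, sq_abs]
      ring
    have hw : ‖z - b • y‖ = Real.sqrt (1 - b^2) := by
      rw [← hw2, Real.sqrt_sq (norm_nonneg _)]
    have := abs_real_inner_le_norm (x - a • y) (z - b • y)
    rw [hiuw, hu, hw] at this
    have := neg_le_of_abs_le this
    linarith
  have hAxy : angle x y = Real.arccos a := by simp [angle, hx, hy, ha]
  have hAyz : angle y z = Real.arccos b := by simp [angle, hy, hz, hb]
  have hAxz : angle x z = Real.arccos c := by simp [angle, hx, hz, hc]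
  have hcos : Real.cos (angle x y + angle y z) ≤ c := by
    rw [Real.cos_add, hAxy, hAyz, Real.cos_arccos (neg_le_of_abs_le ha1) (le_of_abs_le ha1),
      Real.cos_arccos (neg_le_of_abs_le hb1) (le_of_abs_le hb1), Real.sin_arccos,
      Real.sin_arccos]
    exact key
  rw [hAxz]
  calc Real.arccos c ≤ Real.arccos (Real.cos (angle x y + angle y z)) :=
        my_arccos_le_arccos hcos
    _ = angle x y + angle y z := Real.arccos_cos
        (by have := angle_nonneg x y; have := angle_nonneg y z; linarith) h.le

lemma angle_le_of_chord {p q : V} (hp : ‖p‖ = 1) (hq : ‖q‖ = 1) {M : ℝ} (hM0 : 0 ≤ M)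
    (hMπ : M ≤ π) (h : ‖p - q‖ / 2 ≤ Real.sin (M / 2)) : angle p q ≤ M := by
  have hip : @inner ℝ _ _ p q = 1 - ‖p - q‖ ^ 2 / 2 := by
    have := norm_sub_sq_real p q
    rw [hp, hq] at this
    linarith
  have hcosM : Real.cos M = 1 - 2 * Real.sin (M / 2) ^ 2 := by
    have h1 : Real.cos M = Real.cos (2 * (M / 2)) := by ring_nf
    rw [h1, Real.cos_two_mul]
    have := Real.sin_sq_add_cos_sq (M / 2)
    linarith
  have hnn : (0:ℝ) ≤ ‖p - q‖ / 2 := by positivity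
  have hcos : Real.cos M ≤ @inner ℝ _ _ p q := by
    rw [hcosM, hip]
    nlinarith
  have hA : angle p q = Real.arccos (@inner ℝ _ _ p q) := by simp [angle, hp, hq]
  rw [hA]
  calc Real.arccos (@inner ℝ _ _ p q) ≤ Real.arccos (Real.cos M) := my_arccos_le_arccos hcos
    _ = M := Real.arccos_cos hM0 hMπ

end Lemmas

lemma meridian_hasDerivAt (φ t : ℝ) :
    HasDerivAt (meridian φ)
      ((WithLp.equiv 2 (Fin 3 → ℝ)).symm
        ![Real.cos t * Real.cos φ, Real.cos t * Real.sin φ, -Real.sin t]) t := by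
  have h : HasDerivAt
      (fun s => (![Real.sin s * Real.cos φ, Real.sin s * Real.sin φ, Real.cos s] : Fin 3 → ℝ))
      ![Real.cos t * Real.cos φ, Real.cos t * Real.sin φ, -Real.sin t] t := by
    rw [hasDerivAt_pi]
    intro i
    fin_cases i
    · simpa using (Real.hasDerivAt_sin t).mul_const (Real.cos φ)
    · simpa using (Real.hasDerivAt_sin t).mul_const (Real.sin φ)
    · simpa using Real.hasDerivAt_cos t
  exact (((EuclideanSpace.equiv (Fin 3) ℝ).symm :
      (Fin 3 → ℝ) →L[ℝ] E3).hasFDerivAt.comp_hasDerivAt t h)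

lemma norm_equiv_symm (a b c : ℝ) :
    ‖(WithLp.equiv 2 (Fin 3 → ℝ)).symm ![a, b, c]‖ = Real.sqrt (a^2 + b^2 + c^2) := by
  rw [EuclideanSpace.norm_eq]
  congr 1
  simp [Fin.sum_univ_three, sq_abs]

lemma norm_meridian (φ t : ℝ) : ‖meridian φ t‖ = 1 := by
  rw [meridian, norm_equiv_symm]
  rw [show (Real.sin t * Real.cos φ)^2 + (Real.sin t * Real.sin φ)^2 + (Real.cos t)^2 = 1 by
    nlinarith [Real.sin_sq_add_cos_sq t, Real.sin_sq_add_cos_sq φ]]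
  exact Real.sqrt_one

lemma norm_meridian_deriv (φ t : ℝ) :
    ‖(WithLp.equiv 2 (Fin 3 → ℝ)).symm
      ![Real.cos t * Real.cos φ, Real.cos t * Real.sin φ, -Real.sin t]‖ = 1 := by
  rw [norm_equiv_symm]
  rw [show (Real.cos t * Real.cos φ)^2 + (Real.cos t * Real.sin φ)^2 + (-Real.sin t)^2 = 1 by
    nlinarith [Real.sin_sq_add_cos_sq t, Real.sin_sq_add_cos_sq φ]]
  exact Real.sqrt_one

lemma norm_NP : ‖NP‖ = 1 := by
  rw [NP, norm_equiv_symm]; norm_num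

lemma SP_eq_neg_NP : SP = -NP := by
  ext i
  fin_cases i <;> simp [SP, NP]

lemma meridian_zero (φ : ℝ) : meridian φ 0 = NP := by
  ext i
  fin_cases i <;> simp [meridian, NP]

lemma meridian_pi (φ : ℝ) : meridian φ π = SP := by
  ext i
  fin_cases i <;> simp [meridian, SP]

lemma part1 (Ω : E3 → ℝ)
    (hΩmer : ∀ n : ℕ, 1 ≤ n → ∀ t ∈ Icc (0:ℝ) π, Ω (meridian (1 / (n * π)) t) = 1) :
    ∃ σ : ℝ → E3, IsCausalSpatial Ω σ ∧ σ 0 = NP ∧ σ π = SP := by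
  refine ⟨meridian (1/π), ⟨fun t _ => norm_meridian _ t, ?_, ?_⟩, meridian_zero _, meridian_pi _⟩
  · refine ⟨1, ?_⟩
    have hdiff : Differentiable ℝ (meridian (1/π)) :=
      fun t => (meridian_hasDerivAt _ t).differentiableAt
    have hL : LipschitzWith 1 (meridian (1/π)) := by
      refine lipschitzWith_of_nnnorm_deriv_le hdiff (fun t => ?_)
      rw [← NNReal.coe_le_coe, coe_nnnorm, (meridian_hasDerivAt _ t).deriv, norm_meridian_deriv]
      norm_num
    exact hL.lipschitzOnWith
  · refine ae_restrict_of_forall_mem measurableSet_Icc (fun t ht _ => ?_)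
    rw [(meridian_hasDerivAt _ t).deriv, norm_meridian_deriv]
    have h1 : Ω (meridian (1/π) t) = 1 := by simpa using hΩmer 1 le_rfl t ht
    rw [h1]
    norm_num

open InnerProductGeometry in
set_option maxHeartbeats 1000000 in
lemma part2 (Ω : E3 → ℝ) (hΩ1 : ∀ p : E3, ‖p‖ = 1 → 1 ≤ Ω p) :
    ¬ ∃ σ : ℝ → E3, ContDiffOn ℝ 1 σ (Icc 0 π) ∧
        (∀ t ∈ Icc (0:ℝ) π, ‖σ t‖ = 1) ∧ σ 0 = NP ∧ σ π = SP ∧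
        ∀ t ∈ Icc (0:ℝ) π, Ω (σ t) * ‖derivWithin σ (Icc 0 π) t‖ ^ 2 < 1 := by
  rintro ⟨σ, hC1, hsph, h0, hπ, hlt⟩
  have hπpos := Real.pi_pos
  have hIcc : UniqueDiffOn ℝ (Icc (0:ℝ) π) := uniqueDiffOn_Icc hπpos
  have hgcont : ContinuousOn (fun t => ‖derivWithin σ (Icc 0 π) t‖) (Icc 0 π) :=
    (hC1.continuousOn_derivWithin hIcc le_rfl).norm
  obtain ⟨t₀, ht₀, hmax⟩ := isCompact_Icc.exists_isMaxOn (nonempty_Icc.2 hπpos.le) hgcont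
  set c := ‖derivWithin σ (Icc 0 π) t₀‖ with hcdef
  have hc0 : 0 ≤ c := norm_nonneg _
  have hc1 : c < 1 := by
    have h1 := hlt t₀ ht₀
    have h2 := hΩ1 (σ t₀) (hsph t₀ ht₀)
    nlinarith
  have hchord : ∀ s ∈ Icc (0:ℝ) π, ∀ t ∈ Icc (0:ℝ) π, ‖σ t - σ s‖ ≤ c * |t - s| := by
    intro s hs t ht
    have := (convex_Icc (0:ℝ) π).norm_image_sub_le_of_norm_derivWithin_le
      (hC1.differentiableOn one_ne_zero) (fun x hx => hmax hx) ht hs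
    rw [norm_sub_rev, abs_sub_comm]
    simpa [Real.norm_eq_abs] using this
  set c' := (c+1)/2 with hc'
  have hc'pos : 0 < c' := by rw [hc']; linarith
  have hc'lt1 : c' < 1 := by rw [hc']; linarith
  -- choose subdivision size
  have h1c : 0 < 1 - c := by linarith
  have hδpos : 0 < min 1 (Real.sqrt (8*(1-c))) :=
    lt_min one_pos (Real.sqrt_pos.2 (by linarith))
  obtain ⟨n, hn⟩ := exists_nat_gt (π / min 1 (Real.sqrt (8*(1-c))))
  have hnpos : 0 < (n:ℝ) := lt_trans (div_pos hπpos hδpos) hn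
  set Δ := π / n with hΔdef
  have hΔpos : 0 < Δ := div_pos hπpos hnpos
  have hΔδ : Δ < min 1 (Real.sqrt (8*(1-c))) := by
    rw [hΔdef, div_lt_iff₀ hnpos]
    have := (div_lt_iff₀ hδpos).1 hn
    linarith [mul_comm (min 1 (Real.sqrt (8*(1-c)))) (n:ℝ)]
  have hΔ1 : Δ ≤ 1 := le_of_lt (hΔδ.trans_le (min_le_left _ _))
  have hΔsq : Δ^2 ≤ 8*(1-c) := by
    have h := hΔδ.trans_le (min_le_right _ _)
    nlinarith [Real.sq_sqrt (show (0:ℝ) ≤ 8*(1-c) by linarith),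
      Real.sqrt_nonneg (8*(1-c))]
  set M := c' * Δ with hM
  have hM0 : 0 ≤ M := by positivity
  have hMπ : M ≤ π := by
    have : M ≤ 1 := by
      have := mul_le_one₀ hc'lt1.le hΔpos.le hΔ1
      rw [hM]; linarith
    linarith [Real.pi_gt_three]
  have hsinM : c * Δ / 2 ≤ Real.sin (M / 2) := by
    have hx : (0:ℝ) < c' * Δ / 2 := by positivity
    have hx1 : c' * Δ / 2 ≤ 1 := by
      have := mul_le_one₀ hc'lt1.le hΔpos.le hΔ1
      linarith
    have hsin1 := Real.sin_gt_sub_cube hx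
    have hc'3 : c'^3 ≤ 1 := pow_le_one₀ hc'pos.le hc'lt1.le
    have key : c'^3 * Δ^2 ≤ 8*(1-c) := by nlinarith [sq_nonneg Δ]
    have key2 : (c'*Δ/2)^3/4 ≤ (1-c)*Δ/4 := by
      have h3 := mul_le_mul_of_nonneg_right key hΔpos.le
      nlinarith [h3]
    have hid : c' * Δ / 2 - (1-c)*Δ/4 = c*Δ/2 := by rw [hc']; ring
    have hM2 : M / 2 = c' * Δ / 2 := by rw [hM]
    rw [hM2]
    linarith [hsin1, key2, hid, pow_pos hx 3]
  have hNPne : NP ≠ 0 := by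
    intro h
    have h2 : ‖NP‖ = 1 := norm_NP
    rw [h, norm_zero] at h2
    exact zero_ne_one h2
  set θ : ℝ → ℝ := fun t => angle NP (σ t) with hθ
  have hθ0 : θ 0 = 0 := by rw [hθ]; simp only; rw [h0]; exact angle_self hNPne
  have hθπ : θ π = π := by
    rw [hθ]; simp only; rw [hπ, SP_eq_neg_NP]; exact angle_self_neg_of_nonzero hNPne
  have hmem : ∀ i : ℕ, i ≤ n → (i:ℝ) * Δ ∈ Icc (0:ℝ) π := by
    intro i hi
    constructor
    · positivity
    · have hi' : (i:ℝ) ≤ n := by exact_mod_cast hi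
      rw [hΔdef]
      rw [div_le_iff₀ hnpos] at *
      calc (i:ℝ) * (π/n) ≤ (n:ℝ) * (π/n) := by
            apply mul_le_mul_of_nonneg_right hi' (by positivity)
        _ = π := by field_simp
  have step : ∀ i : ℕ, i < n → θ (((i:ℝ)+1) * Δ) - θ ((i:ℝ) * Δ) ≤ M := by
    intro i hi
    have ht1 := hmem i hi.le
    have ht2 : ((i:ℝ)+1) * Δ ∈ Icc (0:ℝ) π := by
      have := hmem (i+1) hi
      push_cast at this
      exact this
    have htri := angle_triangle_unit norm_NP (hsph _ ht1) (hsph _ ht2)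
    have hch := hchord _ ht1 _ ht2
    have habs : |((i:ℝ)+1) * Δ - (i:ℝ) * Δ| = Δ := by
      rw [show ((i:ℝ)+1) * Δ - (i:ℝ) * Δ = Δ by ring, abs_of_pos hΔpos]
    rw [habs] at hch
    have hangle : angle (σ ((i:ℝ) * Δ)) (σ (((i:ℝ)+1) * Δ)) ≤ M := by
      apply angle_le_of_chord (hsph _ ht1) (hsph _ ht2) hM0 hMπ
      rw [norm_sub_rev]
      linarith
    simp only [hθ]
    linarith
  have hsum := Finset.sum_range_sub (fun i : ℕ => θ ((i:ℝ) * Δ)) n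
  have hend : θ ((n:ℝ) * Δ) = π := by
    rw [show (n:ℝ) * Δ = π by rw [hΔdef]; field_simp]
    exact hθπ
  have hstart : θ (((0:ℕ):ℝ) * Δ) = 0 := by
    norm_num
    exact hθ0
  have hbound : ∑ i ∈ Finset.range n, (θ (((i:ℝ)+1) * Δ) - θ ((i:ℝ) * Δ)) ≤ n * M := by
    calc ∑ i ∈ Finset.range n, (θ (((i:ℝ)+1) * Δ) - θ ((i:ℝ) * Δ))
        ≤ ∑ i ∈ Finset.range n, M :=
          Finset.sum_le_sum (fun i hi => step i (Finset.mem_range.1 hi))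
      _ = n * M := by rw [Finset.sum_const, Finset.card_range, nsmul_eq_mul]
  have hcast : ∑ i ∈ Finset.range n, (θ ((((i:ℕ)+1:ℕ):ℝ) * Δ) - θ ((i:ℝ) * Δ))
      = ∑ i ∈ Finset.range n, (θ (((i:ℝ)+1) * Δ) - θ ((i:ℝ) * Δ)) := by
    apply Finset.sum_congr rfl
    intro i _
    push_cast
    ring_nf
  rw [hcast] at hsum
  rw [hsum] at hbound
  rw [hend, hstart, sub_zero] at hbound
  have hfin : (n:ℝ) * M = c' * π := by rw [hM, hΔdef]; field_simp
  rw [hfin] at hbound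
  nlinarith

/-- `(π,S) ∈ J⁺((0,N)) \ I⁺((0,N))`: there is a causal curve from `(0,N)` to `(π,S)` but
no timelike one; the two events are horismotically related. -/
theorem stmt_14 (Ω : E3 → ℝ) (hΩcont : Continuous Ω)
    (hΩ1 : ∀ p : E3, ‖p‖ = 1 → 1 ≤ Ω p)
    (hΩmer : ∀ n : ℕ, 1 ≤ n → ∀ t ∈ Icc (0:ℝ) π, Ω (meridian (1 / (n * π)) t) = 1)
    (hΩeq : ∀ φ ∈ Ioo 0 (π / 2), (∀ n : ℕ, 1 ≤ n → φ ≠ 1 / (n * π)) →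
      1 < Ω (equatorPt φ)) :
    (∃ σ : ℝ → E3, IsCausalSpatial Ω σ ∧ σ 0 = NP ∧ σ π = SP) ∧
    ¬ ∃ σ : ℝ → E3, ContDiffOn ℝ 1 σ (Icc 0 π) ∧
        (∀ t ∈ Icc (0:ℝ) π, ‖σ t‖ = 1) ∧ σ 0 = NP ∧ σ π = SP ∧
        ∀ t ∈ Icc (0:ℝ) π, Ω (σ t) * ‖derivWithin σ (Icc 0 π) t‖ ^ 2 < 1 :=
  ⟨part1 Ω hΩmer, part2 Ω hΩ1⟩

end
end
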